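/- arXiv:1709.06676 — 6 statements merged into one kernel-verified Lean document; each statement's English description precedes it below -/
import Mathlib

section
/- Let $m,p>0$ with $mp>1$, $0<\beta<1$, $b>0$, and suppose $p(m+\beta)=1+p$. Define $C_* = \left[\frac{b(mp-\beta)^{1+p}}{(m(1+p))^{p} p(m+\beta)}\right]^{1/(mp-\beta)}$ and, for a constant $C>0$, let $\zeta_* = b(1-\beta)C^{\beta-1}\left((C/C_*)^{mp-\beta}-1\right)$. Then the travelling wave $u(x,t)=C(\zeta_* t - x)_+^{(1+p)/(mp-\beta)}$ satisfies, at every point where $\zeta_* t - x > 0$, the equation $u_t = \big(|(u^m)_x|^{p-1}(u^m)_x\big)_x - b u^{\beta}$. -/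
open Real

/-- positive part -/
noncomputable def pp (s : ℝ) : ℝ := max s 0

lemma hd_time (A ζ x e t : ℝ) (hy : 0 < ζ * t - x) :
    HasDerivAt (fun τ => A * (ζ * τ - x) ^ e) (A * (e * (ζ * t - x) ^ (e - 1) * ζ)) t := by
  have h1 : HasDerivAt (fun τ : ℝ => ζ * τ - x) ζ t := by
    simpa using ((hasDerivAt_id t).const_mul ζ).sub_const x
  have h2 := (Real.hasDerivAt_rpow_const (x := ζ * t - x) (p := e) (Or.inl hy.ne')).comp t h1
  exact h2.const_mul A

lemma hd_space (A c e y : ℝ) (hy : 0 < c - y) :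
    HasDerivAt (fun z => A * (c - z) ^ e) (A * (e * (c - y) ^ (e - 1) * (-1))) y := by
  have h1 : HasDerivAt (fun z : ℝ => c - z) (-1) y := by
    simpa using (hasDerivAt_id y).const_sub c
  have h2 := (Real.hasDerivAt_rpow_const (x := c - y) (p := e) (Or.inl hy.ne')).comp y h1
  exact h2.const_mul A

set_option maxHeartbeats 1000000 in
/-- the travelling wave `u(x,t) = C (ζ* t - x)_+^{(1+p)/(mp-β)}`
solves `u_t = (|(u^m)_x|^{p-1} (u^m)_x)_x - b u^β` where it is positive,
in the borderline case `p(m+β) = 1+p`. -/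
theorem stmt0 (m p β b C : ℝ) (hm : 0 < m) (hp : 0 < p) (hmp : 1 < m * p)
    (hβ0 : 0 < β) (hβ1 : β < 1) (hb : 0 < b) (hC : 0 < C)
    (hcrit : p * (m + β) = 1 + p) :
    let Cstar : ℝ := (b * (m * p - β) ^ (1 + p) /
      ((m * (1 + p)) ^ p * p * (m + β))) ^ (1 / (m * p - β))
    let ζ : ℝ := b * (1 - β) * C ^ (β - 1) * ((C / Cstar) ^ (m * p - β) - 1)
    let u : ℝ → ℝ → ℝ := fun x t => C * (pp (ζ * t - x)) ^ ((1 + p) / (m * p - β))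
    ∀ x t : ℝ, 0 < ζ * t - x →
      deriv (fun τ => u x τ) t =
        deriv (fun y => |deriv (fun z => (u z t) ^ m) y| ^ (p - 1) *
          deriv (fun z => (u z t) ^ m) y) x - b * (u x t) ^ β := by
  intro Cstar ζ u x t hs
  have hζ : ζ = b * (1 - β) * C ^ (β - 1) * ((C / Cstar) ^ (m * p - β) - 1) := rfl
  have hCs : Cstar = (b * (m * p - β) ^ (1 + p) /
      ((m * (1 + p)) ^ p * p * (m + β))) ^ (1 / (m * p - β)) := rfl
  have hu : ∀ y τ, u y τ = C * (pp (ζ * τ - y)) ^ ((1 + p) / (m * p - β)) := fun _ _ => rfl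
  have hq : 0 < m * p - β := by linarith
  set q := m * p - β with hqdef
  set A := (1 + p) / q with hAdef
  have hApos : 0 < A := div_pos (by linarith) hq
  -- basic exponent identities
  have hq1 : (1 + p) * (1 - β) = q := by rw [hqdef]; linear_combination -hcrit
  have hA1 : A * (1 - β) = 1 := by
    rw [hAdef]; field_simp; linear_combination hq1
  have hexp1 : A * β = A - 1 := by linear_combination -hA1
  have hAm : A * m - 1 = (m + β) / q := by
    rw [hAdef, div_mul_eq_mul_div, div_sub_one hq.ne', hqdef]; ring
  set g := A * m - 1 with hgdef
  have hg : 0 < g := by rw [hAm]; positivity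
  have hexp2 : g * p = A := by
    rw [hAm, hAdef]; field_simp; linear_combination hcrit
  set K := C ^ m * (A * m) with hKdef
  have hK : 0 < K := by
    have := Real.rpow_pos_of_pos hC m
    positivity
  -- time derivative
  have hct : Continuous fun τ : ℝ => ζ * τ - x := (continuous_const.mul continuous_id).sub continuous_const
  have hev : (fun τ : ℝ => ζ * τ - x) ⁻¹' Set.Ioi 0 ∈ nhds t :=
    hct.continuousAt (Ioi_mem_nhds hs)
  have hteq : (fun τ => u x τ) =ᶠ[nhds t] fun τ => C * (ζ * τ - x) ^ A := by
    filter_upwards [hev] with τ hτ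
    have hτ' : (0:ℝ) < ζ * τ - x := hτ
    rw [hu, show pp (ζ * τ - x) = ζ * τ - x from max_eq_left hτ'.le]
  have h1 : deriv (fun τ => u x τ) t = C * (A * (ζ * t - x) ^ (A - 1) * ζ) :=
    hteq.deriv_eq.trans (hd_time C ζ x A t hs).deriv
  -- inner spatial derivative
  have hinner : ∀ y : ℝ, 0 < ζ * t - y →
      deriv (fun z => (u z t) ^ m) y = -(K * (ζ * t - y) ^ g) := by
    intro y hy
    have hcs : Continuous fun z : ℝ => ζ * t - z := continuous_const.sub continuous_id
    have hev2 : (fun z : ℝ => ζ * t - z) ⁻¹' Set.Ioi 0 ∈ nhds y :=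
      hcs.continuousAt (Ioi_mem_nhds hy)
    have heq : (fun z => (u z t) ^ m) =ᶠ[nhds y] fun z => (C ^ m) * (ζ * t - z) ^ (A * m) := by
      filter_upwards [hev2] with z hz
      have hz' : (0:ℝ) < ζ * t - z := hz
      rw [hu, show pp (ζ * t - z) = ζ * t - z from max_eq_left hz'.le,
        Real.mul_rpow hC.le (Real.rpow_nonneg hz'.le _), ← Real.rpow_mul hz'.le]
    rw [heq.deriv_eq, (hd_space (C ^ m) (ζ * t) (A * m) y hy).deriv, hKdef, hgdef]
    ring
  -- outer function
  have hcs : Continuous fun y : ℝ => ζ * t - y := continuous_const.sub continuous_id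
  have hnb : (fun y : ℝ => ζ * t - y) ⁻¹' Set.Ioi 0 ∈ nhds x :=
    hcs.continuousAt (Ioi_mem_nhds hs)
  have houter : (fun y => |deriv (fun z => (u z t) ^ m) y| ^ (p - 1) *
      deriv (fun z => (u z t) ^ m) y) =ᶠ[nhds x]
      fun y => (-(K ^ p)) * (ζ * t - y) ^ (g * p) := by
    filter_upwards [hnb] with y hy
    have hy' : (0:ℝ) < ζ * t - y := hy
    rw [hinner y hy']
    have hw : 0 < (ζ * t - y) ^ g := Real.rpow_pos_of_pos hy' g
    have hKw : 0 < K * (ζ * t - y) ^ g := mul_pos hK hw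
    rw [abs_neg, abs_of_pos hKw, mul_neg,
      show (K * (ζ * t - y) ^ g) ^ (p - 1) * (K * (ζ * t - y) ^ g)
        = (K * (ζ * t - y) ^ g) ^ p by
          rw [← Real.rpow_add_one hKw.ne' (p - 1)]; norm_num,
      Real.mul_rpow hK.le hw.le, ← Real.rpow_mul hy'.le]
    ring
  have h2 : deriv (fun y => |deriv (fun z => (u z t) ^ m) y| ^ (p - 1) *
      deriv (fun z => (u z t) ^ m) y) x
      = (-(K ^ p)) * (g * p * (ζ * t - x) ^ (g * p - 1) * (-1)) :=
    houter.deriv_eq.trans (hd_space (-(K ^ p)) (ζ * t) (g * p) x hs).deriv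
  -- constants
  set P := (m * (1 + p)) ^ p with hPdef
  have hP : 0 < P := Real.rpow_pos_of_pos (by positivity) p
  set Qp := q ^ p with hQdef
  have hQ : 0 < Qp := Real.rpow_pos_of_pos hq p
  have hq1p : q ^ (1 + p) = q * Qp := by
    rw [hQdef, Real.rpow_add hq, Real.rpow_one]
  have hXpos : (0:ℝ) < b * (q ^ (1 + p)) / (P * p * (m + β)) := by positivity
  have hE : Cstar ^ q = b * (q * Qp) / (P * p * (m + β)) := by
    rw [hCs, ← Real.rpow_mul hXpos.le, one_div, inv_mul_cancel₀ hq.ne', Real.rpow_one, hq1p]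
  have hCstarpos : 0 < Cstar := by rw [hCs]; positivity
  have hdivq : (C / Cstar) ^ q = C ^ q / Cstar ^ q := Real.div_rpow hC.le hCstarpos.le q
  have hzeta : ζ = b * (1 - β) * C ^ (β - 1) *
      (C ^ q * (P * p * (m + β)) / (b * (q * Qp)) - 1) := by
    rw [hζ, hdivq, hE, div_div_eq_mul_div]
  have hCβ : C ^ β = C * C ^ (β - 1) := by
    rw [show C * C ^ (β - 1) = C ^ (1:ℝ) * C ^ (β - 1) by rw [Real.rpow_one],
      ← Real.rpow_add hC]; norm_num
  have hKp : K ^ p = C ^ q * C ^ β * (P / Qp) := by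
    have hAmval : A * m = m * (1 + p) / q := by rw [hAdef]; ring
    rw [hKdef, Real.mul_rpow (Real.rpow_nonneg hC.le m) (mul_nonneg hApos.le hm.le),
      ← Real.rpow_mul hC.le, hAmval,
      Real.div_rpow (by positivity) hq.le, ← hPdef, ← hQdef,
      show m * p = q + β by rw [hqdef]; ring, Real.rpow_add hC]
  -- coefficient identity
  have hcoef : C * A * ζ = K ^ p * (g * p) - b * C ^ β := by
    rw [hzeta, hKp, hAm]
    have l1 : ∀ W : ℝ, C * A * (b * (1 - β) * C ^ (β - 1) * W) = b * C ^ β * W := by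
      intro W
      linear_combination (b * C * C ^ (β - 1) * W) * hA1 - (b * W) * hCβ
    rw [l1]
    field_simp
  -- final assembly
  rw [h1, h2, hu x t, show pp (ζ * t - x) = ζ * t - x from max_eq_left hs.le,
    Real.mul_rpow hC.le (Real.rpow_nonneg hs.le _), ← Real.rpow_mul hs.le,
    show g * p - 1 = A - 1 by rw [hexp2], hexp1]
  linear_combination (ζ * t - x) ^ (A - 1) * hcoef
end

section
/- Let $m,p>0$ with $mp>1$, $b>0$, $C>0$, and $\alpha=(1+p)/(mp-1)$. Define $\bar C=\left[\frac{(mp-1)^{1+p}}{p(m+1)(m(1+p))^{p}}\right]^{1/(mp-1)}$ and $u(x,t)=C(-x)_+^{(1+p)/(mp-1)} e^{-bt}\big[1-(C/\bar C)^{mp-1} b^{-1}(1-e^{-b(mp-1)t})\big]^{1/(1-mp)}$. Then at every point with $x<0$ and $0\le t<T$ (where $T$ is the maximal existence time, $T=+\infty$ if $b\ge (C/\bar C)^{mp-1}$), $u$ satisfies $u_t=\big(|(u^m)_x|^{p-1}(u^m)_x\big)_x - b u$. -/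
open Real

/-- the explicit solution for `β = 1`,
`u(x,t) = C(-x)_+^{(1+p)/(mp-1)} e^{-bt} [1 - (C/C̄)^{mp-1} b⁻¹ (1 - e^{-b(mp-1)t})]^{1/(1-mp)}`,
satisfies `u_t = (|(u^m)_x|^{p-1}(u^m)_x)_x - b u` at every point with `x < 0`,
`0 ≤ t`, on the region where the bracketed factor stays positive
(i.e. `t < T`, the maximal existence time; `T = +∞` when `b ≥ (C/C̄)^{mp-1}`). -/
theorem stmt2 (m p b C : ℝ) (hm : 0 < m) (hp : 0 < p) (hmp : 1 < m * p)
    (hb : 0 < b) (hC : 0 < C) :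
    let Cbar : ℝ := ((m * p - 1) ^ (1 + p) /
      (p * (m + 1) * (m * (1 + p)) ^ p)) ^ (1 / (m * p - 1))
    let u : ℝ → ℝ → ℝ := fun x t =>
      C * (pp (-x)) ^ ((1 + p) / (m * p - 1)) * Real.exp (-b * t) *
        (1 - (C / Cbar) ^ (m * p - 1) * b⁻¹ *
          (1 - Real.exp (-b * (m * p - 1) * t))) ^ (1 / (1 - m * p))
    ∀ x t : ℝ, x < 0 → 0 ≤ t →
      0 < 1 - (C / Cbar) ^ (m * p - 1) * b⁻¹ *
            (1 - Real.exp (-b * (m * p - 1) * t)) →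
      deriv (fun τ => u x τ) t =
        deriv (fun y => |deriv (fun z => (u z t) ^ m) y| ^ (p - 1) *
          deriv (fun z => (u z t) ^ m) y) x - b * u x t := by
  intro Cbar u x t hx ht hg
  have hCbar_def : Cbar = ((m * p - 1) ^ (1 + p) /
      (p * (m + 1) * (m * (1 + p)) ^ p)) ^ (1 / (m * p - 1)) := rfl
  have hu : ∀ z τ : ℝ, u z τ = C * (pp (-z)) ^ ((1 + p) / (m * p - 1)) * Real.exp (-b * τ) *
      (1 - (C / Cbar) ^ (m * p - 1) * b⁻¹ *
        (1 - Real.exp (-b * (m * p - 1) * τ))) ^ (1 / (1 - m * p)) := fun _ _ => rfl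
  simp only [hu]
  clear hu
  set q : ℝ := 1 / (1 - m * p) with hq_def
  set a : ℝ := m * p - 1 with ha_def
  have ha : 0 < a := by rw [ha_def]; linarith
  have ha' : a ≠ 0 := ne_of_gt ha
  have h1mp : (1 : ℝ) - m * p ≠ 0 := sub_ne_zero.mpr (ne_of_lt hmp)
  have hmp0 : m * p - 1 ≠ 0 := sub_ne_zero.mpr (ne_of_gt hmp)
  set α : ℝ := (1 + p) / a with hα_def
  have hα : 0 < α := div_pos (by linarith) ha
  set K : ℝ := (C / Cbar) ^ a with hK_def
  set X : ℝ := a ^ (1 + p) / (p * (m + 1) * (m * (1 + p)) ^ p) with hX_def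
  set GT : ℝ := 1 - K * b⁻¹ * (1 - Real.exp (-b * a * t)) with hGT_def
  have hX : 0 < X := by
    rw [hX_def]
    exact div_pos (Real.rpow_pos_of_pos ha _)
      (mul_pos (mul_pos hp (by linarith)) (Real.rpow_pos_of_pos (by positivity) _))
  have hCbarpos : 0 < Cbar := by rw [hCbar_def]; exact Real.rpow_pos_of_pos hX _
  have hK : 0 < K := by rw [hK_def]; exact Real.rpow_pos_of_pos (div_pos hC hCbarpos) _
  have hxpos : (0:ℝ) < -x := by linarith
  have hppx : pp (-x) = -x := by unfold pp; exact max_eq_left (by linarith)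
  simp only [hppx]
  set A : ℝ := C ^ m * Real.exp (-b * t) ^ m * (GT ^ q) ^ m with hA_def
  have hA : 0 < A := by
    rw [hA_def]
    exact mul_pos (mul_pos (Real.rpow_pos_of_pos hC m)
      (Real.rpow_pos_of_pos (Real.exp_pos _) m))
      (Real.rpow_pos_of_pos (Real.rpow_pos_of_pos hg q) m)
  have hαmpos : 0 < α * m := mul_pos hα hm
  -- basic derivative helpers
  have hlin : ∀ (c s : ℝ), HasDerivAt (fun τ : ℝ => c * τ) c s := fun c s => by
    simpa using (hasDerivAt_id s).const_mul c
  have hexp : HasDerivAt (fun τ : ℝ => Real.exp (-b * τ)) (Real.exp (-b * t) * -b) t := by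
    simpa using (hlin (-b) t).exp
  have hGt : HasDerivAt (fun τ : ℝ => 1 - K * b⁻¹ * (1 - Real.exp (-b * a * τ)))
      (-(K * a * Real.exp (-b * a * t))) t := by
    have h2 : HasDerivAt (fun τ : ℝ => Real.exp (-b * a * τ))
        (Real.exp (-b * a * t) * (-b * a)) t := by simpa using (hlin (-b * a) t).exp
    have h4 : HasDerivAt (fun τ : ℝ => 1 - K * b⁻¹ * (1 - Real.exp (-b * a * τ)))
        (0 - K * b⁻¹ * (0 - Real.exp (-b * a * t) * (-b * a))) t := (hasDerivAt_const t (1:ℝ)).sub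
      (HasDerivAt.const_mul (K * b⁻¹) ((hasDerivAt_const t (1:ℝ)).sub h2))
    convert h4 using 1
    linear_combination (K * a * Real.exp (-b * a * t)) * inv_mul_cancel₀ hb.ne'
  have hGpow : HasDerivAt (fun τ : ℝ => (1 - K * b⁻¹ * (1 - Real.exp (-b * a * τ))) ^ q)
      (-(K * a * Real.exp (-b * a * t)) * q * GT ^ (q - 1)) t := by
    exact hGt.rpow_const (Or.inl hg.ne')
  have hF : HasDerivAt (fun τ : ℝ => C * (-x) ^ α * Real.exp (-b * τ) *
        (1 - K * b⁻¹ * (1 - Real.exp (-b * a * τ))) ^ q)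
      (C * (-x) ^ α * (Real.exp (-b * t) * -b) * GT ^ q +
        C * (-x) ^ α * Real.exp (-b * t) *
          (-(K * a * Real.exp (-b * a * t)) * q * GT ^ (q - 1))) t := by
    exact (HasDerivAt.const_mul (C * (-x) ^ α) hexp).mul hGpow
  -- spatial inner derivative
  have hinner : ∀ y : ℝ, y < 0 →
      deriv (fun z => (C * pp (-z) ^ α * Real.exp (-b * t) * GT ^ q) ^ m) y
        = -(A * (α * m)) * (-y) ^ (α * m - 1) := by
    intro y hy
    have hyp : (0:ℝ) < -y := by linarith
    have hev : (fun z => (C * pp (-z) ^ α * Real.exp (-b * t) * GT ^ q) ^ m)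
        =ᶠ[nhds y] fun z => A * (-z) ^ (α * m) := by
      filter_upwards [Iio_mem_nhds hy] with z hz
      have hz0 : z < 0 := hz
      have hzp : (0:ℝ) < -z := by linarith
      have h1 : pp (-z) = -z := by unfold pp; exact max_eq_left (by linarith)
      rw [h1, hA_def,
        Real.mul_rpow (mul_nonneg (mul_nonneg hC.le (Real.rpow_nonneg hzp.le α))
          (Real.exp_pos _).le) (Real.rpow_nonneg hg.le q),
        Real.mul_rpow (mul_nonneg hC.le (Real.rpow_nonneg hzp.le α)) (Real.exp_pos _).le,
        Real.mul_rpow hC.le (Real.rpow_nonneg hzp.le α),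
        ← Real.rpow_mul hzp.le]
      ring
    have hd0 : HasDerivAt (fun z : ℝ => A * (-z) ^ (α * m))
        (A * (-1 * (α * m) * (-y) ^ (α * m - 1))) y := by
      exact ((hasDerivAt_neg y).rpow_const (Or.inl hyp.ne')).const_mul A
    rw [hev.deriv_eq, hd0.deriv]
    ring
  -- outer eventual equality
  have houter : (fun y => |deriv (fun z => (C * pp (-z) ^ α * Real.exp (-b * t) * GT ^ q) ^ m) y| ^ (p - 1) *
        deriv (fun z => (C * pp (-z) ^ α * Real.exp (-b * t) * GT ^ q) ^ m) y)
      =ᶠ[nhds x] fun y => -((A * (α * m)) ^ p) * (-y) ^ ((α * m - 1) * p) := by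
    filter_upwards [Iio_mem_nhds hx] with y hy
    have hy0 : y < 0 := hy
    have hyp : (0:ℝ) < -y := by linarith
    have hBpos : 0 < A * (α * m) := mul_pos hA hαmpos
    have rpos : 0 < (-y) ^ (α * m - 1) := Real.rpow_pos_of_pos hyp _
    rw [hinner y hy0, neg_mul, abs_neg, abs_of_pos (mul_pos hBpos rpos),
      Real.mul_rpow hBpos.le rpos.le, ← Real.rpow_mul hyp.le,
      show (A * (α * m)) ^ p = (A * (α * m)) ^ (p - 1) * (A * (α * m)) from by
        rw [← Real.rpow_add_one hBpos.ne' (p - 1)]; norm_num,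
      show ((α * m - 1) * p : ℝ) = (α * m - 1) * (p - 1) + (α * m - 1) from by ring,
      Real.rpow_add hyp]
    ring
  have hdo : HasDerivAt (fun y : ℝ => -((A * (α * m)) ^ p) * (-y) ^ ((α * m - 1) * p))
      (-((A * (α * m)) ^ p) * (-1 * ((α * m - 1) * p) * (-x) ^ ((α * m - 1) * p - 1))) x := by
    exact ((hasDerivAt_neg x).rpow_const (Or.inl hxpos.ne')).const_mul _
  -- exponent identities
  have hexpo : (α * m - 1) * p - 1 = α := by
    rw [hα_def]; linear_combination (1 + p) * mul_inv_cancel₀ ha' - (1 + p) * a⁻¹ * ha_def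
  have hqa : q * a = -1 := by
    rw [hq_def, ha_def]; field_simp; ring
  -- algebraic core
  have hαm1 : α * m - 1 = (m + 1) / a := by
    rw [hα_def]; linear_combination mul_inv_cancel₀ ha' - a⁻¹ * ha_def
  have hαm : α * m = m * (1 + p) / a := by
    rw [hα_def]; ring
  have hm1 : (0:ℝ) < m + 1 := by linarith
  have hMp : (0:ℝ) < (m * (1 + p)) ^ p := Real.rpow_pos_of_pos (by positivity) p
  have hap : (0:ℝ) < a ^ p := Real.rpow_pos_of_pos ha p
  have hY : X * ((α * m) ^ p * ((α * m - 1) * p)) = 1 := by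
    rw [hX_def, hαm1, hαm, Real.div_rpow (by positivity) ha.le,
      show a ^ (1 + p) = a * a ^ p from by rw [Real.rpow_add ha, Real.rpow_one]]
    field_simp
  have hCbar_a : Cbar ^ a = X := by
    rw [hCbar_def, ← Real.rpow_mul hX.le, one_div, inv_mul_cancel₀ ha', Real.rpow_one]
  have hKX : K * X = C ^ a := by
    rw [hK_def, Real.div_rpow hC.le hCbarpos.le, hCbar_a]
    field_simp
  have hCmp : C ^ (m * p) = C * C ^ a := by
    rw [show (m * p : ℝ) = 1 + a from by rw [ha_def]; ring, Real.rpow_add hC, Real.rpow_one]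
  have hEE : Real.exp (-b * t) ^ (m * p) = Real.exp (-b * t) * Real.exp (-b * a * t) := by
    rw [← Real.exp_mul, ← Real.exp_add, Real.exp_eq_exp, ha_def]; ring
  have hGmp : (GT ^ q) ^ (m * p) = GT ^ (q - 1) := by
    rw [← Real.rpow_mul hg.le]
    congr 1
    rw [hq_def]
    field_simp
    try ring
  have hkey : (A * (α * m)) ^ p * ((α * m - 1) * p)
      = C * K * (Real.exp (-b * t) * Real.exp (-b * a * t)) * GT ^ (q - 1) := by
    rw [Real.mul_rpow hA.le hαmpos.le, hA_def,
      Real.mul_rpow (mul_nonneg (Real.rpow_nonneg hC.le m)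
        (Real.rpow_nonneg (Real.exp_pos _).le m))
        (Real.rpow_nonneg (Real.rpow_nonneg hg.le q) m),
      Real.mul_rpow (Real.rpow_nonneg hC.le m) (Real.rpow_nonneg (Real.exp_pos _).le m),
      ← Real.rpow_mul hC.le, ← Real.rpow_mul (Real.exp_pos _).le,
      ← Real.rpow_mul (Real.rpow_nonneg hg.le q),
      hCmp, hEE, hGmp]
    linear_combination (-(C * (Real.exp (-b * t) * Real.exp (-b * a * t)) * GT ^ (q - 1) *
        ((α * m) ^ p * ((α * m - 1) * p)))) * hKX +
      (C * K * (Real.exp (-b * t) * Real.exp (-b * a * t)) * GT ^ (q - 1)) * hY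
  rw [hF.deriv, houter.deriv_eq, hdo.deriv, hexpo]
  linear_combination (-(C * (-x) ^ α * Real.exp (-b * t) * GT ^ (q - 1) * K *
      Real.exp (-b * a * t))) * hqa + (-(-x) ^ α) * hkey
end

section
/- Let $m,p>0$ with $mp>1$, $C>0$, and $\lambda = -C^{mp-1}\frac{p(m+1)(m(1+p))^{p}}{(mp-1)^{1+p}}$, $t_* = \frac{1}{\lambda(1-mp)}$. Then the function $u(x,t)=C(-x)_+^{(1+p)/(mp-1)}\big[\lambda(t_*-t)(1-mp)\big]^{1/(1-mp)}$ satisfies $u_t=\big(|(u^m)_x|^{p-1}(u^m)_x\big)_x$ at every point with $x<0$ and $0\le t<t_*$. In particular, the interface $\eta(t)=\sup\{x:u(x,t)>0\}=0$ remains stationary for $0\le t<t_*$. -/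
open Real

/-- the explicit solution
`u(x,t) = C(-x)_+^{(1+p)/(mp-1)} [λ (t*-t)(1-mp)]^{1/(1-mp)}` (with
`λ = -C^{mp-1} p(m+1)(m(1+p))^p/(mp-1)^{1+p}`, `t* = 1/(λ(1-mp))`)
solves `u_t = (|(u^m)_x|^{p-1}(u^m)_x)_x` for `x < 0`, `0 ≤ t < t*`,
and its interface `η(t) = sup {x : u(x,t) > 0} = 0` remains stationary. -/
theorem stmt3 (m p C : ℝ) (hm : 0 < m) (hp : 0 < p) (hmp : 1 < m * p)
    (hC : 0 < C) :
    let lam : ℝ := -C ^ (m * p - 1) * (p * (m + 1) * (m * (1 + p)) ^ p /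
      (m * p - 1) ^ (1 + p))
    let tstar : ℝ := 1 / (lam * (1 - m * p))
    let u : ℝ → ℝ → ℝ := fun x t =>
      C * (pp (-x)) ^ ((1 + p) / (m * p - 1)) *
        (lam * (tstar - t) * (1 - m * p)) ^ (1 / (1 - m * p))
    (∀ x t : ℝ, x < 0 → 0 ≤ t → t < tstar →
      deriv (fun τ => u x τ) t =
        deriv (fun y => |deriv (fun z => (u z t) ^ m) y| ^ (p - 1) *
          deriv (fun z => (u z t) ^ m) y) x) ∧
    (∀ t : ℝ, 0 ≤ t → t < tstar → sSup {x : ℝ | 0 < u x t} = 0) := by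
  intro lam tstar u
  have hlamdef : lam = -C ^ (m * p - 1) * (p * (m + 1) * (m * (1 + p)) ^ p /
      (m * p - 1) ^ (1 + p)) := rfl
  have hu : u = fun x t => C * (pp (-x)) ^ ((1 + p) / (m * p - 1)) *
      (lam * (tstar - t) * (1 - m * p)) ^ (1 / (1 - m * p)) := rfl
  have hq : (0:ℝ) < m * p - 1 := by linarith
  have h1p : (0:ℝ) < 1 + p := by linarith
  have hmp1 : (0:ℝ) < m * (1 + p) := by positivity
  have hCr : (0:ℝ) < C ^ (m * p - 1) := rpow_pos_of_pos hC _
  have hF : (0:ℝ) < p * (m + 1) * (m * (1 + p)) ^ p / (m * p - 1) ^ (1 + p) := by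
    have h1 : (0:ℝ) < (m * (1 + p)) ^ p := rpow_pos_of_pos hmp1 _
    have h2 : (0:ℝ) < (m * p - 1) ^ (1 + p) := rpow_pos_of_pos hq _
    have h3 : (0:ℝ) < m + 1 := by linarith
    positivity
  have hlamneg : lam < 0 := by
    rw [hlamdef]
    nlinarith [mul_pos hCr hF]
  have hα : 0 < (1 + p) / (m * p - 1) := div_pos h1p hq
  have hT : ∀ s : ℝ, s < tstar → 0 < lam * (tstar - s) * (1 - m * p) := by
    intro s hs
    have h1 : lam * (tstar - s) * (1 - m * p) = (lam * (1 - m * p)) * (tstar - s) := by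
      ring
    rw [h1]
    exact mul_pos (mul_pos_of_neg_of_neg hlamneg (by linarith)) (by linarith)
  constructor
  · -- the PDE
    intro x t hx ht0 ht1
    have hxpos : (0:ℝ) < -x := by linarith
    have hppx : pp (-x) = -x := max_eq_left (by simp [hx.le])
    rw [hu]
    set A : ℝ := (1 + p) / (m * p - 1) with hAdef
    set B : ℝ := 1 / (1 - m * p) with hBdef
    set Tt : ℝ := lam * (tstar - t) * (1 - m * p) with hTtdef
    have hTt : 0 < Tt := hT t ht1
    have hTb : 0 < Tt ^ B := rpow_pos_of_pos hTt _
    -- LHS time derivative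
    have hL : HasDerivAt
        (fun τ : ℝ => C * pp (-x) ^ A * (lam * (tstar - τ) * (1 - m * p)) ^ B)
        (C * pp (-x) ^ A * (lam * (0 - 1) * (1 - m * p) * B * Tt ^ (B - 1))) t := by
      have h1 : HasDerivAt (fun τ : ℝ => tstar - τ) (0 - 1) t :=
        (hasDerivAt_const t tstar).sub (hasDerivAt_id t)
      have h2 := (h1.const_mul lam).mul_const (1 - m * p)
      exact (h2.rpow_const (Or.inl hTt.ne')).const_mul (C * pp (-x) ^ A)
    -- space derivative of u^m
    have hvderiv : ∀ y : ℝ, y < 0 →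
        deriv (fun z => (C * pp (-z) ^ A * Tt ^ B) ^ m) y
          = C ^ m * (Tt ^ B) ^ m * (-1 * (A * m) * (-y) ^ (A * m - 1)) := by
      intro y hy
      have hy' : (0:ℝ) < -y := by linarith
      have hD : HasDerivAt (fun z : ℝ => C ^ m * (Tt ^ B) ^ m * (-z) ^ (A * m))
          (C ^ m * (Tt ^ B) ^ m * (-1 * (A * m) * (-y) ^ (A * m - 1))) y := by
        have h1 : HasDerivAt (fun z : ℝ => -z) (-1) y := (hasDerivAt_id y).neg
        exact (h1.rpow_const (Or.inl hy'.ne')).const_mul _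
      have hEq : (fun z => (C * pp (-z) ^ A * Tt ^ B) ^ m)
          =ᶠ[nhds y] (fun z => C ^ m * (Tt ^ B) ^ m * (-z) ^ (A * m)) := by
        filter_upwards [Iio_mem_nhds hy] with z hz
        have hz' : (0:ℝ) < -z := by simpa using hz
        have hpz : pp (-z) = -z := max_eq_left (by linarith)
        rw [hpz, Real.mul_rpow (by positivity) hTb.le,
          Real.mul_rpow hC.le (rpow_nonneg hz'.le A), ← Real.rpow_mul hz'.le]
        ring
      rw [hEq.deriv_eq, hD.deriv]
    -- the nonlinear flux
    set K : ℝ := C ^ m * (Tt ^ B) ^ m * (A * m) with hKdef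
    have hK : 0 < K :=
      mul_pos (mul_pos (rpow_pos_of_pos hC m) (rpow_pos_of_pos hTb m)) (mul_pos hα hm)
    have hEqF : (fun y => |deriv (fun z => (C * pp (-z) ^ A * Tt ^ B) ^ m) y| ^ (p - 1) *
          deriv (fun z => (C * pp (-z) ^ A * Tt ^ B) ^ m) y)
        =ᶠ[nhds x] (fun y => -(K ^ p * (-y) ^ ((A * m - 1) * p))) := by
      filter_upwards [Iio_mem_nhds hx] with y hy
      have hy' : (0:ℝ) < -y := by simpa using hy
      rw [hvderiv y (by simpa using hy)]
      have hs : (0:ℝ) < K * (-y) ^ (A * m - 1) :=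
        mul_pos hK (rpow_pos_of_pos hy' _)
      have h1 : C ^ m * (Tt ^ B) ^ m * (-1 * (A * m) * (-y) ^ (A * m - 1))
          = -(K * (-y) ^ (A * m - 1)) := by rw [hKdef]; ring
      rw [h1, abs_neg, abs_of_pos hs]
      have h2 : (K * (-y) ^ (A * m - 1)) ^ (p - 1) * -(K * (-y) ^ (A * m - 1))
          = -((K * (-y) ^ (A * m - 1)) ^ p) := by
        rw [mul_neg, ← Real.rpow_add_one hs.ne' (p - 1)]
        norm_num
      rw [h2, Real.mul_rpow hK.le (rpow_nonneg hy'.le _), ← Real.rpow_mul hy'.le]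
    have hR : HasDerivAt (fun y : ℝ => -(K ^ p * (-y) ^ ((A * m - 1) * p)))
        (-(K ^ p * (-1 * ((A * m - 1) * p) * (-x) ^ ((A * m - 1) * p - 1)))) x := by
      have h1 : HasDerivAt (fun y : ℝ => -y) (-1) x := (hasDerivAt_id x).neg
      exact ((h1.rpow_const (Or.inl hxpos.ne')).const_mul (K ^ p)).neg
    rw [hL.deriv, hEqF.deriv_eq, hR.deriv]
    -- the algebraic identity
    have e1 : (A * m - 1) * p - 1 = A := by
      rw [hAdef, div_mul_eq_mul_div, div_sub_one hq.ne', div_mul_eq_mul_div, div_sub_one hq.ne',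
        div_eq_div_iff hq.ne' hq.ne']; ring
    have hne : (1:ℝ) - m * p ≠ 0 := by linarith
    have e2 : B * (m * p) = B - 1 := by
      rw [hBdef]; field_simp; ring
    have e3 : lam * (0 - 1) * (1 - m * p) * B = -lam := by
      rw [hBdef]; field_simp; ring
    have hKp : K ^ p = C ^ (m * p) * Tt ^ (B - 1) * (A * m) ^ p := by
      rw [hKdef, Real.mul_rpow (mul_nonneg (rpow_nonneg hC.le m) (rpow_nonneg hTb.le m))
        (mul_pos hα hm).le,
        Real.mul_rpow (rpow_nonneg hC.le m) (rpow_nonneg hTb.le m),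
        ← Real.rpow_mul hC.le, ← Real.rpow_mul hTb.le, ← Real.rpow_mul hTt.le,
        e2]
    have hAm1 : A * m - 1 = (m + 1) / (m * p - 1) := by
      rw [hAdef, div_mul_eq_mul_div, div_sub_one hq.ne']; ring
    have hAm : A * m = m * (1 + p) / (m * p - 1) := by
      rw [hAdef]; ring
    have key : -lam * C = C ^ (m * p) * ((A * m) ^ p * ((A * m - 1) * p)) := by
      have hC1 : C ^ (m * p) = C ^ (m * p - 1) * C := by
        rw [← Real.rpow_add_one hC.ne' (m * p - 1)]; norm_num
      rw [hlamdef, hC1, hAm1, hAm, Real.div_rpow hmp1.le hq.le,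
        show (1:ℝ) + p = p + 1 by ring, Real.rpow_add_one hq.ne' p]
      have hqp : (0:ℝ) < (m * p - 1) ^ p := rpow_pos_of_pos hq p
      field_simp
    rw [hppx, e3, e1, hKp]
    linear_combination ((-x) ^ A * Tt ^ (B - 1)) * key
  · -- the interface
    intro t ht0 ht1
    have hset : {x : ℝ | 0 < u x t} = Set.Iio 0 := by
      ext x
      simp only [Set.mem_setOf_eq, Set.mem_Iio, hu]
      constructor
      · intro h
        by_contra hxc
        push_neg at hxc
        have hz : pp (-x) = 0 := max_eq_right (by linarith)
        rw [hz, Real.zero_rpow hα.ne'] at h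
        simp at h
      · intro hx
        have hppx : pp (-x) = -x := max_eq_left (by linarith)
        rw [hppx]
        exact mul_pos (mul_pos hC (rpow_pos_of_pos (by linarith) _))
          (rpow_pos_of_pos (hT t ht1) _)
    rw [hset]
    exact csSup_Iio
end

section
/- Let $m,p>0$ with $mp>1$, $0<\beta<1$, $b>0$, and suppose $p(m+\beta)>1+p$. Consider the phase-plane ODE $\frac{dY}{dX}=k + bmX^{m+\beta-1}Y^{-1/p}$ with $Y(0)=0$ and $k>0$. If $Y$ is the (increasing, global) solution, then $Y(X)\sim \left[\frac{bm(1+p)}{p(m+\beta)}\right]^{p/(1+p)} X^{p(m+\beta)/(1+p)}$ as $X\to+\infty$, i.e. $\lim_{X\to+\infty} X^{-p(m+\beta)/(1+p)} Y(X) = \left[\frac{bm(1+p)}{p(m+\beta)}\right]^{p/(1+p)}$. -/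
open Real Filter Set

/-- asymptotics of the phase-plane solution of
`dY/dX = k + b m X^{m+β-1} Y^{-1/p}`, `Y(0)=0`:
`Y(X) ~ [bm(1+p)/(p(m+β))]^{p/(1+p)} X^{p(m+β)/(1+p)}` as `X → +∞`. -/
theorem stmt6 (m p β b k : ℝ) (hm : 0 < m) (hp : 0 < p) (hmp : 1 < m * p)
    (hβ0 : 0 < β) (hβ1 : β < 1) (hb : 0 < b) (hk : 0 < k)
    (hcond : 1 + p < p * (m + β))
    (Y : ℝ → ℝ) (hY0 : Y 0 = 0) (hYpos : ∀ X : ℝ, 0 < X → 0 < Y X)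
    (hmono : StrictMonoOn Y (Set.Ici (0 : ℝ)))
    (hODE : ∀ X : ℝ, 0 < X →
      HasDerivAt Y (k + b * m * X ^ (m + β - 1) * (Y X) ^ (-(1 / p))) X) :
    Tendsto (fun X : ℝ => X ^ (-(p * (m + β) / (1 + p))) * Y X) atTop
      (nhds ((b * m * (1 + p) / (p * (m + β))) ^ (p / (1 + p)))) := by
  have hp1 : (0:ℝ) < 1 + p := by linarith
  have hpne : p ≠ 0 := ne_of_gt hp
  have hp1ne : (1:ℝ) + p ≠ 0 := ne_of_gt hp1
  have hmβ0 : (0:ℝ) < m + β := by linarith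
  set α : ℝ := p * (m + β) / (1 + p) with hαdef
  have hα1 : 1 < α := by rw [hαdef, lt_div_iff₀ hp1]; linarith
  have hα0 : 0 < α := by linarith
  have hmβ1 : (0:ℝ) < m + β - 1 := by nlinarith
  have hexp : m + β - 1 + -(α / p) = α - 1 := by
    rw [hαdef]; field_simp; try ring
  set base : ℝ := b * m * (1 + p) / (p * (m + β)) with hbase
  have hbase0 : 0 < base := by
    rw [hbase]; exact div_pos (by positivity) (by positivity)
  set C : ℝ := base ^ (p / (1 + p)) with hCdef
  have hC0 : 0 < C := Real.rpow_pos_of_pos hbase0 _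
  have hCpow : C ^ ((1 + p) / p) = base := by
    rw [hCdef, ← Real.rpow_mul hbase0.le]
    rw [show p / (1 + p) * ((1 + p) / p) = 1 by field_simp]
    exact Real.rpow_one _
  have hbase_eq : base * α = b * m := by
    rw [hbase, hαdef]; field_simp; try ring
  have hsplit : ∀ t : ℝ, 0 < t → t ^ ((1 + p) / p) = t * t ^ (1 / p) := by
    intro t ht
    have h : (1 + p) / p = 1 + 1 / p := by field_simp; try ring
    rw [h, Real.rpow_add ht, Real.rpow_one]
  -- Key algebraic inequalities
  have keylt : ∀ t : ℝ, 0 < t → t < C → t * α < b * m * t ^ (-(1 / p)) := by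
    intro t ht htC
    have h1 : t ^ ((1 + p) / p) < C ^ ((1 + p) / p) :=
      Real.rpow_lt_rpow ht.le htC (by positivity)
    rw [hCpow] at h1
    have h3 : (0:ℝ) < t ^ (1 / p) := Real.rpow_pos_of_pos ht _
    have h2 : t * t ^ (1 / p) * α < b * m := by
      rw [← hbase_eq, ← hsplit t ht]
      exact mul_lt_mul_of_pos_right h1 hα0
    rw [Real.rpow_neg ht.le, ← div_eq_mul_inv, lt_div_iff₀ h3]
    calc t * α * t ^ (1 / p) = t * t ^ (1 / p) * α := by ring
      _ < b * m := h2
  have keygt : ∀ t : ℝ, C < t → b * m * t ^ (-(1 / p)) < t * α := by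
    intro t htC
    have ht : 0 < t := hC0.trans htC
    have h1 : C ^ ((1 + p) / p) < t ^ ((1 + p) / p) :=
      Real.rpow_lt_rpow hC0.le htC (by positivity)
    rw [hCpow] at h1
    have h3 : (0:ℝ) < t ^ (1 / p) := Real.rpow_pos_of_pos ht _
    have h2 : b * m < t * t ^ (1 / p) * α := by
      rw [← hbase_eq, ← hsplit t ht]
      exact mul_lt_mul_of_pos_right h1 hα0
    rw [Real.rpow_neg ht.le, ← div_eq_mul_inv, div_lt_iff₀ h3]
    calc b * m < t * t ^ (1 / p) * α := h2
      _ = t * α * t ^ (1 / p) := by ring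
  have hYcont : ∀ a b' : ℝ, 0 < a → ContinuousOn Y (Icc a b') := by
    intro a b' ha x hx
    exact ((hODE x (lt_of_lt_of_le ha hx.1)).continuousAt).continuousWithinAt
  -- Upper barrier
  have upper : ∀ c : ℝ, C < c → ∃ X₁ ≥ (1:ℝ), ∃ A ≥ (0:ℝ),
      ∀ X ≥ X₁, Y X ≤ c * X ^ α + A := by
    intro c hc
    have hc0 : 0 < c := hC0.trans hc
    have hδ : 0 < c * α - b * m * c ^ (-(1 / p)) := sub_pos.2 (keygt c hc)
    have htend : Tendsto (fun x : ℝ => (c * α - b * m * c ^ (-(1 / p))) * x ^ (α - 1))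
        atTop atTop :=
      (tendsto_rpow_atTop (by linarith : (0:ℝ) < α - 1)).const_mul_atTop hδ
    obtain ⟨X₁', hX₁'⟩ := eventually_atTop.1 (htend.eventually_gt_atTop k)
    set X₁ := max X₁' 1 with hX₁def
    have hX₁1 : (1:ℝ) ≤ X₁ := le_max_right _ _
    set A := max 0 (Y X₁ - c * X₁ ^ α) with hAdef
    refine ⟨X₁, hX₁1, A, le_max_left _ _, ?_⟩
    intro X hX
    have key := image_le_of_deriv_right_lt_deriv_boundary
      (f := Y) (f' := fun x => k + b * m * x ^ (m + β - 1) * (Y x) ^ (-(1 / p)))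
      (a := X₁) (b := X) (B := fun x => c * x ^ α + A)
      (B' := fun x => c * (α * x ^ (α - 1)))
      (hYcont X₁ X (lt_of_lt_of_le one_pos hX₁1))
      (fun x hx => (hODE x (lt_of_lt_of_le (lt_of_lt_of_le one_pos hX₁1) hx.1)).hasDerivWithinAt)
      (by
        have hh := le_max_right 0 (Y X₁ - c * X₁ ^ α)
        rw [← hAdef] at hh
        show Y X₁ ≤ c * X₁ ^ α + A
        linarith)
      (fun x => ((Real.hasDerivAt_rpow_const (x := x) (p := α) (Or.inr hα1.le)).const_mul
        c).add_const A)
      ?_ (right_mem_Icc.2 hX)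
    · exact key
    · intro x hx heq'
      have heq : Y x = c * x ^ α + A := heq'
      have hx1 : (1:ℝ) ≤ x := hX₁1.trans hx.1
      have hx0 : 0 < x := lt_of_lt_of_le one_pos hx1
      have hA0 : (0:ℝ) ≤ A := le_max_left _ _
      have hxα : 0 < c * x ^ α := by positivity
      have hYx : c * x ^ α ≤ Y x := by rw [heq]; linarith
      have h1 : (Y x) ^ (-(1 / p)) ≤ (c * x ^ α) ^ (-(1 / p)) :=
        Real.rpow_le_rpow_of_nonpos hxα hYx (neg_nonpos.2 (by positivity))
      have h2 : x ^ (m + β - 1) * (c * x ^ α) ^ (-(1 / p))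
          = c ^ (-(1 / p)) * x ^ (α - 1) := by
        rw [Real.mul_rpow hc0.le (Real.rpow_pos_of_pos hx0 α).le,
          ← Real.rpow_mul hx0.le, show α * -(1 / p) = -(α / p) by ring,
          mul_left_comm, ← Real.rpow_add hx0, hexp]
      have hkx : k < (c * α - b * m * c ^ (-(1 / p))) * x ^ (α - 1) :=
        hX₁' x ((le_max_left _ _).trans hx.1)
      have h3 : b * m * x ^ (m + β - 1) * (Y x) ^ (-(1 / p))
          ≤ b * m * c ^ (-(1 / p)) * x ^ (α - 1) := by
        calc b * m * x ^ (m + β - 1) * (Y x) ^ (-(1 / p))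
            ≤ b * m * x ^ (m + β - 1) * (c * x ^ α) ^ (-(1 / p)) := by
              apply mul_le_mul_of_nonneg_left h1 (by positivity)
          _ = b * m * c ^ (-(1 / p)) * x ^ (α - 1) := by
              rw [mul_assoc, h2]; ring
      calc k + b * m * x ^ (m + β - 1) * (Y x) ^ (-(1 / p))
          ≤ k + b * m * c ^ (-(1 / p)) * x ^ (α - 1) := by linarith
        _ < (c * α - b * m * c ^ (-(1 / p))) * x ^ (α - 1)
            + b * m * c ^ (-(1 / p)) * x ^ (α - 1) := by linarith
        _ = c * (α * x ^ (α - 1)) := by ring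
  -- Lower barrier
  have lower : ∀ c : ℝ, 0 < c → c < C → ∀ X ≥ (1:ℝ), c * (X - 1) ^ α ≤ Y X := by
    intro c hc0 hcC X hX
    have hVd : ∀ x : ℝ, HasDerivAt (fun y => c * (y - 1) ^ α)
        (c * (α * (x - 1) ^ (α - 1))) x := by
      intro x
      have h1 : HasDerivAt (fun y : ℝ => y - 1) 1 x := (hasDerivAt_id x).sub_const 1
      have h2 : HasDerivAt (fun y : ℝ => (y - 1) ^ α) (α * (x - 1) ^ (α - 1) * 1) x :=
        have h0 : HasDerivAt (fun y : ℝ => y ^ α) (α * (x - 1) ^ (α - 1)) (x - 1) :=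
          Real.hasDerivAt_rpow_const (Or.inr hα1.le)
        HasDerivAt.comp (h := fun y : ℝ => y - 1) x h0 h1
      simpa using h2.const_mul c
    have key := image_le_of_deriv_right_lt_deriv_boundary'
      (f := fun x => c * (x - 1) ^ α) (f' := fun x => c * (α * (x - 1) ^ (α - 1)))
      (a := 1) (b := X) (B := Y)
      (B' := fun x => k + b * m * x ^ (m + β - 1) * (Y x) ^ (-(1 / p)))
      (fun y _ => (hVd y).continuousAt.continuousWithinAt)
      (fun y _ => (hVd y).hasDerivWithinAt)
      (by
        simp only [sub_self, Real.zero_rpow (ne_of_gt hα0), mul_zero]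
        exact (hYpos 1 one_pos).le)
      (hYcont 1 X one_pos)
      (fun x hx => (hODE x (lt_of_lt_of_le one_pos hx.1)).hasDerivWithinAt)
      ?_ (right_mem_Icc.2 hX)
    · exact key
    · intro x hx heq'
      have heq : c * (x - 1) ^ α = Y x := heq'
      have hx0 : 0 < x := lt_of_lt_of_le one_pos hx.1
      have hx1 : 1 < x := by
        rcases lt_or_eq_of_le hx.1 with h | h
        · exact h
        · exfalso
          rw [← h] at heq
          simp only [sub_self, Real.zero_rpow (ne_of_gt hα0), mul_zero] at heq
          exact (hYpos 1 one_pos).ne heq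
      have ht0 : 0 < x - 1 := by linarith
      have hYeq : (Y x) ^ (-(1 / p)) = c ^ (-(1 / p)) * (x - 1) ^ (-(α / p)) := by
        rw [← heq, Real.mul_rpow hc0.le (Real.rpow_pos_of_pos ht0 α).le,
          ← Real.rpow_mul ht0.le, show α * -(1 / p) = -(α / p) by ring]
      have h1 : (x - 1) ^ (m + β - 1) ≤ x ^ (m + β - 1) :=
        Real.rpow_le_rpow ht0.le (by linarith) hmβ1.le
      have h2 : b * m * (x - 1) ^ (m + β - 1) * ((Y x) ^ (-(1 / p)))
          = b * m * c ^ (-(1 / p)) * (x - 1) ^ (α - 1) := by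
        rw [hYeq, mul_assoc, mul_left_comm ((x - 1) ^ (m + β - 1)),
          ← Real.rpow_add ht0, hexp]
        ring
      have h3 : b * m * c ^ (-(1 / p)) * (x - 1) ^ (α - 1)
          ≤ b * m * x ^ (m + β - 1) * ((Y x) ^ (-(1 / p))) := by
        rw [← h2]
        apply mul_le_mul_of_nonneg_right _ (Real.rpow_pos_of_pos (hYpos x hx0) _).le
        exact mul_le_mul_of_nonneg_left h1 (by positivity)
      have h4 : c * α * (x - 1) ^ (α - 1) < b * m * c ^ (-(1 / p)) * (x - 1) ^ (α - 1) :=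
        mul_lt_mul_of_pos_right (keylt c hc0 hcC) (Real.rpow_pos_of_pos ht0 _)
      calc c * (α * (x - 1) ^ (α - 1)) = c * α * (x - 1) ^ (α - 1) := by ring
        _ < b * m * c ^ (-(1 / p)) * (x - 1) ^ (α - 1) := h4
        _ ≤ b * m * x ^ (m + β - 1) * ((Y x) ^ (-(1 / p))) := h3
        _ < k + b * m * x ^ (m + β - 1) * (Y x) ^ (-(1 / p)) := by linarith
  -- Assemble the limit
  refine tendsto_order.2 ⟨?_, ?_⟩
  · -- lower bound
    intro l hl
    set c := max (C / 2) ((l + C) / 2) with hcdef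
    have hc0 : 0 < c := lt_of_lt_of_le (half_pos hC0) (le_max_left _ _)
    have hcC : c < C := max_lt (by linarith) (by linarith)
    have hlc : l < c :=
      lt_of_lt_of_le (by linarith : l < (l + C) / 2) (le_max_right _ _)
    have h1t : Tendsto (fun X : ℝ => 1 - 1 / X) atTop (nhds 1) := by
      have h := Filter.Tendsto.sub
        (tendsto_const_nhds : Tendsto (fun _ : ℝ => (1:ℝ)) atTop (nhds 1))
        tendsto_inv_atTop_zero
      simpa [one_div] using h
    have h2t : Tendsto (fun y : ℝ => y ^ α) (nhds 1) (nhds 1) := by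
      have := (Real.continuousAt_rpow_const 1 α (Or.inl one_ne_zero)).tendsto
      simpa [Real.one_rpow] using this
    have hlim : Tendsto (fun X : ℝ => c * (1 - 1 / X) ^ α) atTop (nhds c) := by
      have := (h2t.comp h1t).const_mul c
      simpa using this
    have hev : ∀ᶠ X in atTop, l < c * (1 - 1 / X) ^ α :=
      hlim.eventually (lt_mem_nhds hlc)
    filter_upwards [hev, eventually_ge_atTop (1:ℝ)] with X h1 h2
    have hX0 : 0 < X := lt_of_lt_of_le one_pos h2
    have hY := lower c hc0 hcC X h2
    have hXα : (0:ℝ) < X ^ α := Real.rpow_pos_of_pos hX0 α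
    have e : X ^ (-α) * (c * (X - 1) ^ α) = c * (1 - 1 / X) ^ α := by
      rw [show (1 : ℝ) - 1 / X = (X - 1) / X by field_simp,
        Real.div_rpow (by linarith : (0:ℝ) ≤ X - 1) hX0.le, Real.rpow_neg hX0.le]
      field_simp
      try ring
    calc l < c * (1 - 1 / X) ^ α := h1
      _ = X ^ (-α) * (c * (X - 1) ^ α) := e.symm
      _ ≤ X ^ (-α) * Y X :=
          mul_le_mul_of_nonneg_left hY (Real.rpow_pos_of_pos hX0 _).le
  · -- upper bound
    intro u hu
    set c := (C + u) / 2 with hcdef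
    have hCc : C < c := by rw [hcdef]; linarith
    have hcu : c < u := by rw [hcdef]; linarith
    obtain ⟨X₁, hX₁1, A, hA0, hbd⟩ := upper c hCc
    have hlim : Tendsto (fun X : ℝ => c + A * X ^ (-α)) atTop (nhds c) := by
      have := ((tendsto_rpow_neg_atTop hα0).const_mul A).const_add c
      simpa using this
    have hev : ∀ᶠ X in atTop, c + A * X ^ (-α) < u :=
      hlim.eventually (gt_mem_nhds hcu)
    filter_upwards [hev, eventually_ge_atTop X₁, eventually_ge_atTop (1:ℝ)] with X h1 h2 h3
    have hX0 : 0 < X := lt_of_lt_of_le one_pos h3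
    have hY := hbd X h2
    have hXα : X ^ α ≠ 0 := ne_of_gt (Real.rpow_pos_of_pos hX0 α)
    have e : X ^ (-α) * (c * X ^ α + A) = c + A * X ^ (-α) := by
      rw [Real.rpow_neg hX0.le]
      field_simp
      try ring
    calc X ^ (-α) * Y X ≤ X ^ (-α) * (c * X ^ α + A) :=
          mul_le_mul_of_nonneg_left hY (Real.rpow_pos_of_pos hX0 _).le
      _ = c + A * X ^ (-α) := e
      _ < u := h1
end

section
/- Let $m,p>0$, $mp>1$, $0<\beta<1$, $b>0$, $p(m+\beta)>1+p$, and $0<C<C_*$. For $\gamma\in[0,1)$ define $g(x,t)=\big[C^{1-\beta}(-x)_+^{(1+p)(1-\beta)/(mp-\beta)} - b(1-\beta)(1-\gamma)t\big]_+^{1/(1-\beta)}$. Then at the initial time, the residual $S$ defined by $Lg = b g^{\beta} S$ (where $Lg = g_t - (|(g^m)_x|^{p-1}(g^m)_x)_x + bg^{\beta}$) satisfies $S|_{t=0} = \gamma - (C/C_*)^{mp-\beta}$ for $x<0$. In particular, with $\gamma=(C/C_*)^{mp-\beta}$, $g(\cdot,0)$ satisfies $Lg|_{t=0}=0$ for $x<0$,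 i.e. $\big(|((u_0)^m)'|^{p-1}((u_0)^m)'\big)' = b\,(C/C_*)^{mp-\beta}\, u_0^{\beta}$ for $u_0(x) = C(-x)_+^{(1+p)/(mp-\beta)}$ and $x<0$. -/
open Real Filter

lemma pp_nonneg' (s : ℝ) : 0 ≤ pp s := le_max_right _ _
lemma pp_of_nonneg' {s : ℝ} (h : 0 ≤ s) : pp s = s := max_eq_left h

lemma hd_neg_rpow (A q z : ℝ) (hz : z < 0) :
    HasDerivAt (fun y : ℝ => A * (-y) ^ q) (-(A * q) * (-z) ^ (q - 1)) z := by
  have h1 : HasDerivAt (fun y : ℝ => -y) (-1 : ℝ) z := hasDerivAt_neg z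
  have h2 : HasDerivAt (fun w : ℝ => w ^ q) (q * (-z) ^ (q - 1)) (-z) :=
    Real.hasDerivAt_rpow_const (Or.inl (neg_pos.mpr hz).ne')
  have h3 := (h2.comp z h1).const_mul A
  rw [show -(A * q) * (-z) ^ (q - 1) = A * (q * (-z) ^ (q - 1) * -1) by ring]
  exact h3

-- derivative of the inner function (u0^m)
lemma deriv_inner (m p β C z : ℝ) (hm : 0 < m) (hp : 0 < p) (hs : 0 < m * p - β)
    (hC0 : 0 < C) (hz : z < 0) :
    deriv (fun z => (C * (pp (-z)) ^ ((1 + p) / (m * p - β))) ^ m) z =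
      -(C ^ m * (m * ((1 + p) / (m * p - β)))) *
        (-z) ^ (m * ((1 + p) / (m * p - β)) - 1) := by
  set e : ℝ := (1 + p) / (m * p - β) with he
  have heq : (fun z => (C * (pp (-z)) ^ e) ^ m) =ᶠ[nhds z]
      (fun y : ℝ => C ^ m * (-y) ^ (m * e)) := by
    filter_upwards [Iio_mem_nhds hz] with y hy
    have hy0 : (0:ℝ) ≤ -y := by simp at hy; linarith
    rw [pp_of_nonneg' hy0, Real.mul_rpow hC0.le (Real.rpow_nonneg hy0 _),
      ← Real.rpow_mul hy0, mul_comm e m]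
  rw [heq.deriv_eq, (hd_neg_rpow (C ^ m) (m * e) z hz).deriv]

-- derivative of the outer function
lemma deriv_outer (m p β C x : ℝ) (hm : 0 < m) (hp : 0 < p) (hs : 0 < m * p - β)
    (hβ0 : 0 < β) (hC0 : 0 < C) (hx : x < 0) :
    deriv (fun y => |deriv (fun z => (C * (pp (-z)) ^ ((1 + p) / (m * p - β))) ^ m) y| ^ (p - 1) *
        deriv (fun z => (C * (pp (-z)) ^ ((1 + p) / (m * p - β))) ^ m) y) x =
      (C ^ m * (m * ((1 + p) / (m * p - β)))) ^ p *
        ((m * ((1 + p) / (m * p - β)) - 1) * p) *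
        (-x) ^ ((m * ((1 + p) / (m * p - β)) - 1) * p - 1) := by
  set e : ℝ := (1 + p) / (m * p - β) with he
  set K : ℝ := C ^ m * (m * e) with hK
  set a : ℝ := m * e - 1 with ha
  have he0 : 0 < e := div_pos (by linarith) hs
  have hK0 : 0 < K := by positivity
  have heq : (fun y => |deriv (fun z => (C * (pp (-z)) ^ e) ^ m) y| ^ (p - 1) *
      deriv (fun z => (C * (pp (-z)) ^ e) ^ m) y) =ᶠ[nhds x]
      (fun y : ℝ => (-(K ^ p)) * (-y) ^ (a * p)) := by
    filter_upwards [Iio_mem_nhds hx] with y hy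
    simp only [Set.mem_Iio] at hy
    have hy0 : (0:ℝ) < -y := by linarith
    have hd := deriv_inner m p β C y hm hp hs hC0 hy
    rw [hd]
    have hw0 : (0:ℝ) < (-y) ^ a := Real.rpow_pos_of_pos hy0 _
    have habs : |-(K) * (-y) ^ a| = K * (-y) ^ a := by
      rw [abs_of_nonpos (by nlinarith)]; ring
    rw [← hK, habs]
    have : (K * (-y) ^ a) ^ (p - 1) * (-(K) * (-y) ^ a) =
        -((K * (-y) ^ a) ^ (p - 1) * (K * (-y) ^ a) ^ (1:ℝ)) := by
      rw [Real.rpow_one]; ring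
    rw [this, ← Real.rpow_add (by positivity), sub_add_cancel,
      Real.mul_rpow hK0.le hw0.le, ← Real.rpow_mul hy0.le]
    ring
  rw [heq.deriv_eq, (hd_neg_rpow (-(K ^ p)) (a * p) x hx).deriv]
  ring

-- coefficient identity
lemma coeff_id (m p β b C : ℝ) (hm : 0 < m) (hp : 0 < p) (hs : 0 < m * p - β)
    (hβ0 : 0 < β) (hb : 0 < b) (hC0 : 0 < C) :
    (C ^ m * (m * ((1 + p) / (m * p - β)))) ^ p *
        ((m * ((1 + p) / (m * p - β)) - 1) * p) =
      b * (C / (b * (m * p - β) ^ (1 + p) /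
        ((m * (1 + p)) ^ p * p * (m + β))) ^ (1 / (m * p - β))) ^ (m * p - β) * C ^ β := by
  set s : ℝ := m * p - β with hsdef
  set X : ℝ := b * s ^ (1 + p) / ((m * (1 + p)) ^ p * p * (m + β)) with hXdef
  have hmp1 : (0:ℝ) < m * (1 + p) := by positivity
  have hmb : (0:ℝ) < m + β := by positivity
  have hX : 0 < X := by
    apply div_pos (by positivity)
    positivity
  have hCstar : (0:ℝ) < X ^ (1 / s) := Real.rpow_pos_of_pos hX _
  have hCsp : (X ^ (1 / s)) ^ s = X := by
    rw [← Real.rpow_mul hX.le, one_div, inv_mul_cancel₀ hs.ne', Real.rpow_one]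
  have h1 : (C / X ^ (1 / s)) ^ s = C ^ s / X := by
    rw [Real.div_rpow hC0.le hCstar.le, hCsp]
  have hme : m * ((1 + p) / s) = m * (1 + p) / s := by ring
  have hKp : (C ^ m * (m * ((1 + p) / s))) ^ p =
      C ^ (m * p) * ((m * (1 + p)) ^ p / s ^ p) := by
    rw [hme, Real.mul_rpow (by positivity) (by positivity), ← Real.rpow_mul hC0.le,
      Real.div_rpow hmp1.le hs.le]
  have ha : m * ((1 + p) / s) - 1 = (m + β) / s := by
    field_simp
    ring
  have hCC : C ^ s * C ^ β = C ^ (m * p) := by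
    rw [← Real.rpow_add hC0]
    norm_num [hsdef]
  have hsp : s ^ (1 + p) = s * s ^ p := by
    rw [Real.rpow_add hs, Real.rpow_one]
  rw [h1, hKp, ha]
  rw [hXdef, hsp]
  have hspne : s ^ p ≠ 0 := (Real.rpow_pos_of_pos hs p).ne'
  field_simp
  linear_combination -hCC

lemma part2 (m p β b C x : ℝ) (hm : 0 < m) (hp : 0 < p) (hs : 0 < m * p - β)
    (hβ0 : 0 < β) (hb : 0 < b) (hC0 : 0 < C) (hx : x < 0) :
    deriv (fun y => |deriv (fun z => (C * (pp (-z)) ^ ((1 + p) / (m * p - β))) ^ m) y| ^ (p - 1) *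
        deriv (fun z => (C * (pp (-z)) ^ ((1 + p) / (m * p - β))) ^ m) y) x =
      b * (C / (b * (m * p - β) ^ (1 + p) /
        ((m * (1 + p)) ^ p * p * (m + β))) ^ (1 / (m * p - β))) ^ (m * p - β) *
        (C * (pp (-x)) ^ ((1 + p) / (m * p - β))) ^ β := by
  have hx0 : (0:ℝ) < -x := by linarith
  rw [deriv_outer m p β C x hm hp hs hβ0 hC0 hx,
    coeff_id m p β b C hm hp hs hβ0 hb hC0,
    pp_of_nonneg' hx0.le,
    Real.mul_rpow hC0.le (Real.rpow_nonneg hx0.le _), ← Real.rpow_mul hx0.le]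
  have hexp : (m * ((1 + p) / (m * p - β)) - 1) * p - 1 = (1 + p) / (m * p - β) * β := by
    field_simp
    ring
  rw [hexp]
  ring


/-- for `g(x,t) = [C^{1-β}(-x)_+^{(1+p)(1-β)/(mp-β)} - b(1-β)(1-γ)t]_+^{1/(1-β)}`
with `γ ∈ [0,1)`, the residual `S` defined by `Lg = b g^β S` satisfies
`S|_{t=0} = γ - (C/C*)^{mp-β}` for `x < 0`; in particular the power profile
`u₀(x) = C(-x)_+^{(1+p)/(mp-β)}` satisfies
`(|(u₀^m)'|^{p-1}(u₀^m)')' = b (C/C*)^{mp-β} u₀^β` for `x < 0`. -/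
theorem stmt15 (m p β b C γ : ℝ) (hm : 0 < m) (hp : 0 < p) (hmp : 1 < m * p)
    (hβ0 : 0 < β) (hβ1 : β < 1) (hb : 0 < b)
    (hcond : 1 + p < p * (m + β)) (hC0 : 0 < C)
    (hγ0 : 0 ≤ γ) (hγ1 : γ < 1)
    (hCs : C < (b * (m * p - β) ^ (1 + p) /
      ((m * (1 + p)) ^ p * p * (m + β))) ^ (1 / (m * p - β))) :
    let Cstar : ℝ := (b * (m * p - β) ^ (1 + p) /
      ((m * (1 + p)) ^ p * p * (m + β))) ^ (1 / (m * p - β))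
    let g : ℝ → ℝ → ℝ := fun x t =>
      (pp (C ^ (1 - β) * (pp (-x)) ^ ((1 + p) * (1 - β) / (m * p - β)) -
        b * (1 - β) * (1 - γ) * t)) ^ (1 / (1 - β))
    let u0 : ℝ → ℝ := fun x => C * (pp (-x)) ^ ((1 + p) / (m * p - β))
    (∀ x : ℝ, x < 0 →
      deriv (fun τ => g x τ) 0 -
        deriv (fun y => |deriv (fun z => (g z 0) ^ m) y| ^ (p - 1) *
          deriv (fun z => (g z 0) ^ m) y) x + b * (g x 0) ^ β =
      b * (g x 0) ^ β * (γ - (C / Cstar) ^ (m * p - β))) ∧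
    (∀ x : ℝ, x < 0 →
      deriv (fun y => |deriv (fun z => (u0 z) ^ m) y| ^ (p - 1) *
        deriv (fun z => (u0 z) ^ m) y) x =
      b * (C / Cstar) ^ (m * p - β) * (u0 x) ^ β) := by
  have hs : 0 < m * p - β := by linarith
  have hβ1' : (0:ℝ) < 1 - β := by linarith
  intro Cstar g u0
  -- g at time 0 equals u0
  have hgu : ∀ z : ℝ, g z 0 = u0 z := by
    intro z
    show (pp (C ^ (1 - β) * (pp (-z)) ^ ((1 + p) * (1 - β) / (m * p - β)) -
        b * (1 - β) * (1 - γ) * 0)) ^ (1 / (1 - β)) =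
      C * (pp (-z)) ^ ((1 + p) / (m * p - β))
    rw [mul_zero, sub_zero]
    have hw : (0:ℝ) ≤ pp (-z) := pp_nonneg' _
    have hin : (0:ℝ) ≤ C ^ (1 - β) * (pp (-z)) ^ ((1 + p) * (1 - β) / (m * p - β)) := by
      have := Real.rpow_nonneg hw ((1 + p) * (1 - β) / (m * p - β))
      positivity
    rw [pp_of_nonneg' hin,
      Real.mul_rpow (by positivity) (Real.rpow_nonneg hw _),
      ← Real.rpow_mul hC0.le, ← Real.rpow_mul hw]
    congr 1
    · rw [mul_one_div, div_self hβ1'.ne']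
      exact Real.rpow_one C
    · congr 1
      field_simp
  constructor
  · intro x hx
    have hx0 : (0:ℝ) < -x := by linarith
    set A : ℝ := C ^ (1 - β) * (pp (-x)) ^ ((1 + p) * (1 - β) / (m * p - β)) with hA
    set c : ℝ := b * (1 - β) * (1 - γ) with hc
    set r : ℝ := 1 / (1 - β) with hr
    have hA0 : 0 < A := by
      rw [hA, pp_of_nonneg' hx0.le]
      positivity
    -- time derivative
    have hev : ∀ᶠ τ : ℝ in nhds 0, 0 < A - c * τ := by
      have ht : Tendsto (fun τ : ℝ => A - c * τ) (nhds 0) (nhds A) := by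
        have hcont : Continuous (fun τ : ℝ => A - c * τ) := by fun_prop
        simpa using hcont.tendsto 0
      exact ht.eventually (eventually_gt_nhds hA0)
    have heq : (fun τ => g x τ) =ᶠ[nhds 0] (fun τ : ℝ => (A - c * τ) ^ r) := by
      filter_upwards [hev] with τ hτ
      show (pp (A - c * τ)) ^ r = (A - c * τ) ^ r
      rw [pp_of_nonneg' hτ.le]
    have h1 : HasDerivAt (fun τ : ℝ => A - c * τ) (-c) 0 := by
      simpa using ((hasDerivAt_id (0:ℝ)).const_mul c).const_sub A
    have h2 : HasDerivAt (fun w : ℝ => w ^ r) (r * (A - c * 0) ^ (r - 1)) (A - c * 0) :=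
      Real.hasDerivAt_rpow_const (Or.inl (by simp [hA0.ne']))
    have h3 : HasDerivAt (fun τ : ℝ => (A - c * τ) ^ r)
        (r * (A - c * 0) ^ (r - 1) * -c) 0 := HasDerivAt.comp (0:ℝ) (h₂ := fun w : ℝ => w ^ r) h2 h1
    have hg0 : g x 0 = A ^ r := by
      show (pp (A - c * 0)) ^ r = A ^ r
      rw [mul_zero, sub_zero, pp_of_nonneg' hA0.le]
    have hdt : deriv (fun τ => g x τ) 0 = -(b * (1 - γ)) * (g x 0) ^ β := by
      rw [heq.deriv_eq, h3.deriv, hg0, ← Real.rpow_mul hA0.le]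
      rw [mul_zero, sub_zero]
      have hrβ : r * β = r - 1 := by
        rw [hr]; field_simp; ring
      rw [hrβ]
      rw [hc, hr]
      field_simp
    -- spatial derivative
    have hfun : (fun z => (g z 0) ^ m) =
        (fun z => (C * (pp (-z)) ^ ((1 + p) / (m * p - β))) ^ m) := by
      funext z; rw [hgu z]
    have hdx := part2 m p β b C x hm hp hs hβ0 hb hC0 hx
    have hux : C * pp (-x) ^ ((1 + p) / (m * p - β)) = g x 0 := (hgu x).symm
    rw [hdt, hfun, hdx, hux]
    show _ = b * (g x 0) ^ β * (γ - (C / (b * (m * p - β) ^ (1 + p) /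
        ((m * (1 + p)) ^ p * p * (m + β))) ^ (1 / (m * p - β))) ^ (m * p - β))
    ring
  · intro x hx
    exact part2 m p β b C x hm hp hs hβ0 hb hC0 hx
end

section
/- Let $m,p>0$ with $mp>1$, $0<\beta<1$, $b>0$, $C>0$, and $\alpha>(1+p)/(mp-\beta)$. Define, for $\epsilon\in(0,1)$, $g_{\epsilon}(x,t)=\big[(C+\epsilon)^{1-\beta}(-x)_+^{\alpha(1-\beta)} - b(1-\beta)(1-\epsilon)t\big]_+^{1/(1-\beta)}$ and $\eta_{\ell}(t)=-\ell t^{1/(\alpha(1-\beta))}$ with $\ell(\epsilon)=(C+\epsilon)^{-1/\alpha}[b(1-\beta)(1-\epsilon)]^{1/(\alpha(1-\beta))}$. Then on the region $\{(x,t): x<\eta_{\ell(\epsilon)}(t), t>0\}$ where $g_{\epsilon}>0$, one has the identity $L g_\epsilon = b g_\epsilon^{\beta}(\epsilon + S)$ where $S = -b^{-1}(\alpha m)^p (C+\epsilon)^{mp-\beta}(-x)^{\alpha(mp-\beta)-(1+p)}\Big[\tfrac{g_\epsilon(-x)^{-\alpha}}{C+\epsilon}\Big]^{p(m+\beta)-(1+p)}\Big\{\alpha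 p(m+\beta-1) + p(\alpha(1-\beta)-1)\Big[\tfrac{g_\epsilon(-x)^{-\alpha}}{C+\epsilon}\Big]^{1-\beta}\Big\}$, with $Lg = g_t - (|(g^m)_x|^{p-1}(g^m)_x)_x + bg^{\beta}$. Moreover $S\to 0$ as $x\to 0^-$ uniformly on the region (since $\alpha(mp-\beta)-(1+p)>0$), provided $p(m+\beta)\ge 1+p$. -/
open Real

lemma alg_main (m p β b C α ε x u : ℝ) (hβ1 : β < 1)
    (hb : 0 < b) (hA : 0 < C + ε) (hxp : 0 < -x) (hu : 0 < u) :
    1 / (1 - β) * u ^ (1 / (1 - β) - 1) * -(b * (1 - β) * (1 - ε)) -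
        -((α * m) ^ p * (C + ε) ^ ((1 - β) * p) *
            ((1 / (1 - β) * m - 1) * p * u ^ ((1 / (1 - β) * m - 1) * p - 1) *
                  ((C + ε) ^ (1 - β) * (α * (1 - β) * (-x) ^ (α * (1 - β) - 1) * -1)) *
                (-x) ^ ((α * (1 - β) - 1) * p) +
              u ^ ((1 / (1 - β) * m - 1) * p) *
                ((α * (1 - β) - 1) * p * (-x) ^ ((α * (1 - β) - 1) * p - 1) * -1))) +
      b * (u ^ (1 / (1 - β))) ^ β =
    b * (u ^ (1 / (1 - β))) ^ β *
      (ε +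
        -b⁻¹ * (α * m) ^ p * (C + ε) ^ (m * p - β) * (-x) ^ (α * (m * p - β) - (1 + p)) *
            (u ^ (1 / (1 - β)) * (-x) ^ (-α) / (C + ε)) ^ (p * (m + β) - (1 + p)) *
          (α * p * (m + β - 1) +
            p * (α * (1 - β) - 1) *
              (u ^ (1 / (1 - β)) * (-x) ^ (-α) / (C + ε)) ^ (1 - β))) := by
  have hβ' : (0:ℝ) < 1 - β := by linarith
  have h1β : (1:ℝ) - β ≠ 0 := hβ'.ne'
  have hX : ∀ w : ℝ, (u ^ (1 / (1 - β)) * (-x) ^ (-α) / (C + ε)) ^ w =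
      u ^ (1 / (1 - β) * w) * (-x) ^ (-α * w) * (C + ε) ^ (-w) := by
    intro w
    rw [Real.div_rpow (by positivity) hA.le,
      Real.mul_rpow (by positivity) (by positivity),
      ← Real.rpow_mul hu.le, ← Real.rpow_mul hxp.le, div_eq_mul_inv,
      ← Real.rpow_neg hA.le]
  rw [hX, hX, show 1 / (1 - β) * (1 - β) = 1 by field_simp, Real.rpow_one]
  simp only [← Real.rpow_mul hu.le]
  have htime : 1 / (1 - β) * u ^ (1 / (1 - β) - 1) * -(b * (1 - β) * (1 - ε)) +
      b * u ^ (1 / (1 - β) * β) = b * u ^ (1 / (1 - β) * β) * ε := by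
    rw [show 1 / (1 - β) * β = 1 / (1 - β) - 1 by field_simp; ring]
    field_simp
    ring
  have h1f : (α * m) ^ p * (C + ε) ^ ((1 - β) * p) *
        ((1 / (1 - β) * m - 1) * p * u ^ ((1 / (1 - β) * m - 1) * p - 1) *
          ((C + ε) ^ (1 - β) * (α * (1 - β) * (-x) ^ (α * (1 - β) - 1) * -1)) *
          (-x) ^ ((α * (1 - β) - 1) * p)) =
      b * u ^ (1 / (1 - β) * β) *
        (-b⁻¹ * (α * m) ^ p * (C + ε) ^ (m * p - β) * (-x) ^ (α * (m * p - β) - (1 + p)) *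
          (u ^ (1 / (1 - β) * (p * (m + β) - (1 + p))) * (-x) ^ (-α * (p * (m + β) - (1 + p))) *
            (C + ε) ^ (-(p * (m + β) - (1 + p)))) * (α * p * (m + β - 1))) := by
    have L1 : (α * m) ^ p * (C + ε) ^ ((1 - β) * p) *
        ((1 / (1 - β) * m - 1) * p * u ^ ((1 / (1 - β) * m - 1) * p - 1) *
          ((C + ε) ^ (1 - β) * (α * (1 - β) * (-x) ^ (α * (1 - β) - 1) * -1)) *
          (-x) ^ ((α * (1 - β) - 1) * p)) =
        -(((α * m) ^ p * ((1 / (1 - β) * m - 1) * p * (α * (1 - β)))) *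
          (((C + ε) ^ ((1 - β) * p) * (C + ε) ^ (1 - β)) *
            (((-x) ^ (α * (1 - β) - 1) * (-x) ^ ((α * (1 - β) - 1) * p)) *
              u ^ ((1 / (1 - β) * m - 1) * p - 1)))) := by ring
    have R1 : b * u ^ (1 / (1 - β) * β) *
        (-b⁻¹ * (α * m) ^ p * (C + ε) ^ (m * p - β) * (-x) ^ (α * (m * p - β) - (1 + p)) *
          (u ^ (1 / (1 - β) * (p * (m + β) - (1 + p))) * (-x) ^ (-α * (p * (m + β) - (1 + p))) *
            (C + ε) ^ (-(p * (m + β) - (1 + p)))) * (α * p * (m + β - 1))) =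
        -((b * b⁻¹) * ((α * m) ^ p * (α * p * (m + β - 1))) *
          (((C + ε) ^ (m * p - β) * (C + ε) ^ (-(p * (m + β) - (1 + p)))) *
            (((-x) ^ (α * (m * p - β) - (1 + p)) * (-x) ^ (-α * (p * (m + β) - (1 + p)))) *
              (u ^ (1 / (1 - β) * β) * u ^ (1 / (1 - β) * (p * (m + β) - (1 + p))))))) := by ring
    rw [L1, R1, mul_inv_cancel₀ hb.ne', ← Real.rpow_add hA, ← Real.rpow_add hA,
      ← Real.rpow_add hxp, ← Real.rpow_add hxp, ← Real.rpow_add hu,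
      show (m * p - β) + -(p * (m + β) - (1 + p)) = (1 - β) * p + (1 - β) by ring,
      show (α * (m * p - β) - (1 + p)) + -α * (p * (m + β) - (1 + p)) =
        (α * (1 - β) - 1) + (α * (1 - β) - 1) * p by ring,
      show 1 / (1 - β) * β + 1 / (1 - β) * (p * (m + β) - (1 + p)) =
        (1 / (1 - β) * m - 1) * p - 1 by field_simp; ring]
    field_simp
    ring
  have h2f : (α * m) ^ p * (C + ε) ^ ((1 - β) * p) *
        (u ^ ((1 / (1 - β) * m - 1) * p) *
          ((α * (1 - β) - 1) * p * (-x) ^ ((α * (1 - β) - 1) * p - 1) * -1)) =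
      b * u ^ (1 / (1 - β) * β) *
        (-b⁻¹ * (α * m) ^ p * (C + ε) ^ (m * p - β) * (-x) ^ (α * (m * p - β) - (1 + p)) *
          (u ^ (1 / (1 - β) * (p * (m + β) - (1 + p))) * (-x) ^ (-α * (p * (m + β) - (1 + p))) *
            (C + ε) ^ (-(p * (m + β) - (1 + p)))) *
          (p * (α * (1 - β) - 1) * (u * (-x) ^ (-α * (1 - β)) * (C + ε) ^ (-(1 - β))))) := by
    have L2 : (α * m) ^ p * (C + ε) ^ ((1 - β) * p) *
        (u ^ ((1 / (1 - β) * m - 1) * p) *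
          ((α * (1 - β) - 1) * p * (-x) ^ ((α * (1 - β) - 1) * p - 1) * -1)) =
        -(((α * m) ^ p * ((α * (1 - β) - 1) * p)) *
          ((C + ε) ^ ((1 - β) * p) *
            ((-x) ^ ((α * (1 - β) - 1) * p - 1) * u ^ ((1 / (1 - β) * m - 1) * p)))) := by ring
    have R2 : b * u ^ (1 / (1 - β) * β) *
        (-b⁻¹ * (α * m) ^ p * (C + ε) ^ (m * p - β) * (-x) ^ (α * (m * p - β) - (1 + p)) *
          (u ^ (1 / (1 - β) * (p * (m + β) - (1 + p))) * (-x) ^ (-α * (p * (m + β) - (1 + p))) *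
            (C + ε) ^ (-(p * (m + β) - (1 + p)))) *
          (p * (α * (1 - β) - 1) * (u * (-x) ^ (-α * (1 - β)) * (C + ε) ^ (-(1 - β))))) =
        -((b * b⁻¹) * ((α * m) ^ p * ((α * (1 - β) - 1) * p)) *
          (((C + ε) ^ (m * p - β) * (C + ε) ^ (-(p * (m + β) - (1 + p))) * (C + ε) ^ (-(1 - β))) *
            (((-x) ^ (α * (m * p - β) - (1 + p)) * (-x) ^ (-α * (p * (m + β) - (1 + p))) *
                (-x) ^ (-α * (1 - β))) *
              (u ^ (1 / (1 - β) * β) * u ^ (1 / (1 - β) * (p * (m + β) - (1 + p))) * u)))) := by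
      ring
    rw [L2, R2, mul_inv_cancel₀ hb.ne', ← Real.rpow_add hA, ← Real.rpow_add hA,
      ← Real.rpow_add hxp, ← Real.rpow_add hxp, ← Real.rpow_add hu,
      ← Real.rpow_add_one hu.ne',
      show (m * p - β) + -(p * (m + β) - (1 + p)) + -(1 - β) = (1 - β) * p by ring,
      show (α * (m * p - β) - (1 + p)) + -α * (p * (m + β) - (1 + p)) + -α * (1 - β) =
        (α * (1 - β) - 1) * p - 1 by ring,
      show 1 / (1 - β) * β + 1 / (1 - β) * (p * (m + β) - (1 + p)) + 1 =
        (1 / (1 - β) * m - 1) * p by field_simp; ring]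
    field_simp
  linear_combination htime + h1f + h2f


set_option maxHeartbeats 1000000 in
/-- the residual identity `Lg_ε = b g_ε^β (ε + S)` for the
barrier `g_ε(x,t) = [(C+ε)^{1-β}(-x)_+^{α(1-β)} - b(1-β)(1-ε)t]_+^{1/(1-β)}`
on the region `x < η_{ℓ(ε)}(t)`, together with the uniform smallness of `S`
near the interface (when `p(m+β) ≥ 1+p`). -/
theorem stmt18 (m p β b C α ε : ℝ) (hm : 0 < m) (hp : 0 < p) (hmp : 1 < m * p)
    (hβ0 : 0 < β) (hβ1 : β < 1) (hb : 0 < b) (hC : 0 < C)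
    (hα : (1 + p) / (m * p - β) < α) (hε0 : 0 < ε) (hε1 : ε < 1) :
    let g : ℝ → ℝ → ℝ := fun x t =>
      (pp ((C + ε) ^ (1 - β) * (pp (-x)) ^ (α * (1 - β)) -
        b * (1 - β) * (1 - ε) * t)) ^ (1 / (1 - β))
    let l : ℝ := (C + ε) ^ (-(1 / α)) * (b * (1 - β) * (1 - ε)) ^ (1 / (α * (1 - β)))
    let S : ℝ → ℝ → ℝ := fun x t =>
      -(b⁻¹) * (α * m) ^ p * (C + ε) ^ (m * p - β) *
        (-x) ^ (α * (m * p - β) - (1 + p)) *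
        (g x t * (-x) ^ (-α) / (C + ε)) ^ (p * (m + β) - (1 + p)) *
        (α * p * (m + β - 1) +
          p * (α * (1 - β) - 1) * (g x t * (-x) ^ (-α) / (C + ε)) ^ (1 - β))
    (∀ x t : ℝ, 0 < t → x < -l * t ^ (1 / (α * (1 - β))) →
      deriv (fun τ => g x τ) t -
        deriv (fun y => |deriv (fun z => (g z t) ^ m) y| ^ (p - 1) *
          deriv (fun z => (g z t) ^ m) y) x + b * (g x t) ^ β =
      b * (g x t) ^ β * (ε + S x t)) ∧
    (1 + p ≤ p * (m + β) → ∀ δ : ℝ, 0 < δ → ∃ x₀ : ℝ, x₀ < 0 ∧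
      ∀ x t : ℝ, x₀ < x → x < 0 → 0 < t → x < -l * t ^ (1 / (α * (1 - β))) →
        |S x t| < δ) := by
  intro g l S
  have hβ' : (0:ℝ) < 1 - β := by linarith
  have hA : 0 < (C + ε) := by linarith
  have hmpβ : 0 < m * p - β := by nlinarith
  have hα0 : 0 < α := lt_trans (div_pos (by linarith) hmpβ) hα
  have hθ : 0 < α * (m * p - β) - (1 + p) := by
    rw [div_lt_iff₀ hmpβ] at hα; nlinarith
  have he : 0 < (α * (1 - β)) := mul_pos hα0 hβ'
  have hk : 0 < (b * (1 - β) * (1 - ε)) := mul_pos (mul_pos hb hβ') (by linarith)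
  have hl : 0 < l := mul_pos (rpow_pos_of_pos hA _) (rpow_pos_of_pos hk _)
  -- region lemma
  have hreg : ∀ x t : ℝ, 0 < t → x < -l * t ^ (1 / (α * (1 - β))) →
      x < 0 ∧ 0 < ((C + ε) ^ (1 - β) * (-x) ^ (α * (1 - β)) - (b * (1 - β) * (1 - ε)) * t) := by
    intro x t ht hx
    have hT : 0 < t ^ (1 / (α * (1 - β))) := rpow_pos_of_pos ht _
    have hx0 : x < 0 := lt_trans hx (by nlinarith)
    refine ⟨hx0, ?_⟩
    have h1 : l * t ^ (1 / (α * (1 - β))) < -x := by linarith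
    have h2 : (l * t ^ (1 / (α * (1 - β)))) ^ (α * (1 - β)) < (-x) ^ (α * (1 - β)) :=
      rpow_lt_rpow (by positivity) h1 he
    have h3 : (l * t ^ (1 / (α * (1 - β)))) ^ (α * (1 - β)) = (C + ε) ^ (-(1-β)) * ((b * (1 - β) * (1 - ε)) * t) := by
      rw [Real.mul_rpow (by positivity) (by positivity),
        show l = (C + ε) ^ (-(1 / α)) * (b * (1 - β) * (1 - ε)) ^ (1 / (α * (1 - β))) from rfl,
        Real.mul_rpow (by positivity) (by positivity),
        ← Real.rpow_mul hA.le, ← Real.rpow_mul hk.le, ← Real.rpow_mul ht.le,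
        show 1 / (α * (1 - β)) * (α * (1 - β)) = 1 by field_simp,
        show -(1 / α) * (α * (1 - β)) = -(1-β) by field_simp,
        Real.rpow_one, Real.rpow_one]
      ring
    rw [h3] at h2
    have h4 := mul_lt_mul_of_pos_left h2 (Real.rpow_pos_of_pos hA (1-β))
    have h5 : (b * (1 - β) * (1 - ε)) * t < (C + ε) ^ (1-β) * (-x) ^ (α * (1 - β)) := by
      calc (b * (1 - β) * (1 - ε)) * t = (C + ε) ^ (1-β) * ((C + ε) ^ (-(1-β)) * ((b * (1 - β) * (1 - ε))*t)) := by
            rw [← mul_assoc, ← Real.rpow_add hA]; simp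
        _ < (C + ε) ^ (1-β) * (-x) ^ (α * (1 - β)) := h4
    linarith
  -- g equals u^γ on the region
  have hgeq : ∀ x t : ℝ, x < 0 → 0 < ((C + ε) ^ (1 - β) * (-x) ^ (α * (1 - β)) - (b * (1 - β) * (1 - ε)) * t) →
      g x t = ((C + ε) ^ (1 - β) * (-x) ^ (α * (1 - β)) - (b * (1 - β) * (1 - ε)) * t) ^ (1 / (1 - β)) := by
    intro x t hx0 hu
    show (pp ((C + ε) ^ (1 - β) * (pp (-x)) ^ (α * (1 - β)) - (b * (1 - β) * (1 - ε)) * t)) ^ (1 / (1 - β)) = _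
    rw [show pp (-x) = -x from max_eq_left (by linarith),
      show pp (((C + ε) ^ (1 - β) * (-x) ^ (α * (1 - β)) - (b * (1 - β) * (1 - ε)) * t)) = ((C + ε) ^ (1 - β) * (-x) ^ (α * (1 - β)) - (b * (1 - β) * (1 - ε)) * t) from max_eq_left hu.le]
  -- time derivative
  have htd : ∀ x t : ℝ, x < 0 → 0 < ((C + ε) ^ (1 - β) * (-x) ^ (α * (1 - β)) - (b * (1 - β) * (1 - ε)) * t) →
      deriv (fun τ => g x τ) t = (1 / (1 - β)) * ((C + ε) ^ (1 - β) * (-x) ^ (α * (1 - β)) - (b * (1 - β) * (1 - ε)) * t) ^ ((1 / (1 - β)) - 1) * (-(b * (1 - β) * (1 - ε))) := by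
    intro x t hx0 hu
    have hev : (fun τ => g x τ) =ᶠ[nhds t]
        (fun τ => ((C + ε) ^ (1 - β) * (-x) ^ (α * (1 - β)) - (b * (1 - β) * (1 - ε)) * τ) ^ (1 / (1 - β))) := by
      have hopen : IsOpen {τ : ℝ | 0 < ((C + ε) ^ (1 - β) * (-x) ^ (α * (1 - β)) - (b * (1 - β) * (1 - ε)) * τ)} :=
        isOpen_lt continuous_const (by fun_prop)
      filter_upwards [hopen.mem_nhds (by simpa using hu)] with τ hτ
      show (pp ((C + ε) ^ (1 - β) * (pp (-x)) ^ (α * (1 - β)) - (b * (1 - β) * (1 - ε)) * τ)) ^ (1 / (1 - β)) = _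
      rw [show pp (-x) = -x from max_eq_left (by linarith),
        show pp (((C + ε) ^ (1 - β) * (-x) ^ (α * (1 - β)) - (b * (1 - β) * (1 - ε)) * τ)) = ((C + ε) ^ (1 - β) * (-x) ^ (α * (1 - β)) - (b * (1 - β) * (1 - ε)) * τ) from max_eq_left hτ.le]
    rw [hev.deriv_eq]
    have hlin : HasDerivAt (fun τ : ℝ => (C + ε) ^ (1 - β) * (-x) ^ (α * (1 - β)) - (b * (1 - β) * (1 - ε)) * τ)
        (-(b * (1 - β) * (1 - ε))) t := by
      simpa using (((hasDerivAt_id t).const_mul (b * (1 - β) * (1 - ε))).const_sub ((C + ε) ^ (1 - β) * (-x) ^ (α * (1 - β))))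
    exact ((Real.hasDerivAt_rpow_const (p := (1 / (1 - β))) (Or.inl hu.ne')).comp t hlin).deriv
  -- spatial derivative of g^m
  have hV : ∀ y t : ℝ, y < 0 → 0 < ((C + ε) ^ (1 - β) * (-y) ^ (α * (1 - β)) - (b * (1 - β) * (1 - ε)) * t) →
      {z : ℝ | z < 0 ∧ 0 < ((C + ε) ^ (1 - β) * (-z) ^ (α * (1 - β)) - (b * (1 - β) * (1 - ε)) * t)} ∈ nhds y := by
    intro y t hy0 hu
    have hUc : ContinuousAt (fun z : ℝ => ((C + ε) ^ (1 - β) * (-z) ^ (α * (1 - β)) - (b * (1 - β) * (1 - ε)) * t)) y := by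
      have h1 : ContinuousAt (fun z : ℝ => (-z) ^ (α * (1 - β))) y :=
        (Real.continuousAt_rpow_const (-y) (α * (1 - β)) (Or.inl (ne_of_gt (by linarith)))).comp
          (continuous_neg.continuousAt)
      exact ((continuousAt_const.mul h1).sub continuousAt_const)
    exact Filter.inter_mem (Iio_mem_nhds hy0)
      (hUc.preimage_mem_nhds (Ioi_mem_nhds hu))
  have hsd : ∀ y t : ℝ, y < 0 → 0 < ((C + ε) ^ (1 - β) * (-y) ^ (α * (1 - β)) - (b * (1 - β) * (1 - ε)) * t) →
      deriv (fun z => (g z t) ^ m) y =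
        (1 / (1 - β)) * m * ((C + ε) ^ (1 - β) * (-y) ^ (α * (1 - β)) - (b * (1 - β) * (1 - ε)) * t) ^ ((1 / (1 - β)) * m - 1) *
          ((C + ε) ^ (1 - β) * ((α * (1 - β)) * (-y) ^ ((α * (1 - β)) - 1) * (-1))) := by
    intro y t hy0 hu
    have hev : (fun z => (g z t) ^ m) =ᶠ[nhds y]
        (fun z => ((C + ε) ^ (1 - β) * (-z) ^ (α * (1 - β)) - (b * (1 - β) * (1 - ε)) * t) ^ ((1 / (1 - β)) * m)) := by
      filter_upwards [hV y t hy0 hu] with z hz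
      rw [hgeq z t hz.1 hz.2, ← Real.rpow_mul hz.2.le]
    rw [hev.deriv_eq]
    have hneg : HasDerivAt (fun z : ℝ => (-z) ^ (α * (1 - β))) ((α * (1 - β)) * (-y) ^ ((α * (1 - β)) - 1) * (-1)) y :=
      (Real.hasDerivAt_rpow_const (p := (α * (1 - β))) (Or.inl (ne_of_gt (by linarith)))).comp y (hasDerivAt_neg y)
    have hUd : HasDerivAt (fun z : ℝ => ((C + ε) ^ (1 - β) * (-z) ^ (α * (1 - β)) - (b * (1 - β) * (1 - ε)) * t))
        ((C + ε) ^ (1 - β) * ((α * (1 - β)) * (-y) ^ ((α * (1 - β)) - 1) * (-1))) y :=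
      (hneg.const_mul _).sub_const _
    exact ((Real.hasDerivAt_rpow_const (p := (1 / (1 - β)) * m) (Or.inl hu.ne')).comp y hUd).deriv
  constructor
  · intro x t ht hx
    obtain ⟨hx0, hu⟩ := hreg x t ht hx
    have hFev : (fun y => |deriv (fun z => (g z t) ^ m) y| ^ (p - 1) *
          deriv (fun z => (g z t) ^ m) y) =ᶠ[nhds x]
        (fun y => -((α * m) ^ p * (C + ε) ^ ((1 - β) * p) *
          (((C + ε) ^ (1 - β) * (-y) ^ (α * (1 - β)) - (b * (1 - β) * (1 - ε)) * t) ^ (((1 / (1 - β)) * m - 1) * p) * (-y) ^ (((α * (1 - β)) - 1) * p)))) := by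
      filter_upwards [hV x t hx0 hu] with y hy
      rw [hsd y t hy.1 hy.2]
      have hyp : (0:ℝ) < -y := by linarith [hy.1]
      have h4 := rpow_pos_of_pos hy.2 ((1 / (1 - β)) * m - 1)
      have h5 := rpow_pos_of_pos hyp ((α * (1 - β)) - 1)
      have h6 := rpow_pos_of_pos hA (1 - β)
      have hP : 0 < (α * m * (C + ε) ^ (1 - β) * (((C + ε) ^ (1 - β) * (-y) ^ (α * (1 - β)) - (b * (1 - β) * (1 - ε)) * t) ^ ((1 / (1 - β)) * m - 1) * (-y) ^ ((α * (1 - β)) - 1))) := by positivity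
      have hflip : (1 / (1 - β)) * m * ((C + ε) ^ (1 - β) * (-y) ^ (α * (1 - β)) - (b * (1 - β) * (1 - ε)) * t) ^ ((1 / (1 - β)) * m - 1) *
          ((C + ε) ^ (1 - β) * ((α * (1 - β)) * (-y) ^ ((α * (1 - β)) - 1) * (-1))) = -(α * m * (C + ε) ^ (1 - β) * (((C + ε) ^ (1 - β) * (-y) ^ (α * (1 - β)) - (b * (1 - β) * (1 - ε)) * t) ^ ((1 / (1 - β)) * m - 1) * (-y) ^ ((α * (1 - β)) - 1))) := by
        field_simp
      rw [hflip, abs_neg, abs_of_pos hP, mul_neg,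
        ← Real.rpow_add_one hP.ne' (p - 1), sub_add_cancel]
      rw [Real.mul_rpow (by positivity) (by positivity)]
      rw [Real.mul_rpow (by positivity) (by positivity)]
      rw [Real.mul_rpow (by positivity) (by positivity)]
      rw [← Real.rpow_mul hA.le]
      rw [Real.mul_rpow (by positivity) (by positivity)]
      rw [← Real.rpow_mul hy.2.le]
      rw [← Real.rpow_mul hyp.le]
    rw [hFev.deriv_eq]
    have hxp : (0:ℝ) < -x := by linarith
    have hneg : HasDerivAt (fun z : ℝ => (-z) ^ (α * (1 - β))) ((α * (1 - β)) * (-x) ^ ((α * (1 - β)) - 1) * (-1)) x :=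
      (Real.hasDerivAt_rpow_const (p := (α * (1 - β))) (Or.inl hxp.ne')).comp x (hasDerivAt_neg x)
    have hUd : HasDerivAt (fun z : ℝ => ((C + ε) ^ (1 - β) * (-z) ^ (α * (1 - β)) - (b * (1 - β) * (1 - ε)) * t))
        ((C + ε) ^ (1 - β) * ((α * (1 - β)) * (-x) ^ ((α * (1 - β)) - 1) * (-1))) x :=
      (hneg.const_mul _).sub_const _
    have hf1 : HasDerivAt (fun y : ℝ => ((C + ε) ^ (1 - β) * (-y) ^ (α * (1 - β)) - (b * (1 - β) * (1 - ε)) * t) ^ (((1 / (1 - β)) * m - 1) * p))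
        ((((1 / (1 - β)) * m - 1) * p) * ((C + ε) ^ (1 - β) * (-x) ^ (α * (1 - β)) - (b * (1 - β) * (1 - ε)) * t) ^ ((((1 / (1 - β)) * m - 1) * p) - 1) * ((C + ε) ^ (1 - β) * ((α * (1 - β)) * (-x) ^ ((α * (1 - β)) - 1) * (-1)))) x :=
      by convert (hUd.rpow_const (p := (((1 / (1 - β)) * m - 1) * p)) (Or.inl hu.ne')) using 1; ring
    have hf2 : HasDerivAt (fun y : ℝ => (-y) ^ (((α * (1 - β)) - 1) * p)) ((((α * (1 - β)) - 1) * p) * (-x) ^ ((((α * (1 - β)) - 1) * p) - 1) * (-1)) x :=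
      (Real.hasDerivAt_rpow_const (p := (((α * (1 - β)) - 1) * p)) (Or.inl hxp.ne')).comp x (hasDerivAt_neg x)
    have hΦ : HasDerivAt (fun y : ℝ => (α * m) ^ p * (C + ε) ^ ((1 - β) * p) *
        (((C + ε) ^ (1 - β) * (-y) ^ (α * (1 - β)) - (b * (1 - β) * (1 - ε)) * t) ^ (((1 / (1 - β)) * m - 1) * p) * (-y) ^ (((α * (1 - β)) - 1) * p)))
        ((α * m) ^ p * (C + ε) ^ ((1 - β) * p) *
          ((((1 / (1 - β)) * m - 1) * p) * ((C + ε) ^ (1 - β) * (-x) ^ (α * (1 - β)) - (b * (1 - β) * (1 - ε)) * t) ^ ((((1 / (1 - β)) * m - 1) * p) - 1) * ((C + ε) ^ (1 - β) * ((α * (1 - β)) * (-x) ^ ((α * (1 - β)) - 1) * (-1))) * (-x) ^ (((α * (1 - β)) - 1) * p) +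
            ((C + ε) ^ (1 - β) * (-x) ^ (α * (1 - β)) - (b * (1 - β) * (1 - ε)) * t) ^ (((1 / (1 - β)) * m - 1) * p) * ((((α * (1 - β)) - 1) * p) * (-x) ^ ((((α * (1 - β)) - 1) * p) - 1) * (-1)))) x :=
      ((hf1.mul hf2).const_mul _)
    have hΦn := hΦ.neg
    simp only [Pi.neg_def] at hΦn
    rw [hΦn.deriv, htd x t hx0 hu]
    simp only [S]
    rw [hgeq x t hx0 hu]
    have hxp2 : (0:ℝ) < -x := by linarith
    exact alg_main m p β b C α ε x
      ((C + ε) ^ (1 - β) * (-x) ^ (α * (1 - β)) - b * (1 - β) * (1 - ε) * t)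
      hβ1 hb hA hxp2 hu
  · intro hq δ hδ
    set θ := (α * (m * p - β) - (1 + p)) with hθdef
    set Kc := b⁻¹ * (α * m) ^ p * (C + ε) ^ (m * p - β) *
      (α * p * |m + β - 1| + p * |(α * (1 - β)) - 1|) with hKcdef
    have hKc : 0 ≤ Kc := by positivity
    have hKc1 : (0:ℝ) < Kc + 1 := by linarith
    set w : ℝ := min 1 ((δ / (Kc + 1)) ^ (1 / θ)) with hwdef
    have hw : 0 < w := lt_min one_pos (rpow_pos_of_pos (by positivity) _)
    refine ⟨-w, by linarith, ?_⟩
    intro x t hx₀ hx0 ht hxr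
    obtain ⟨-, hu⟩ := hreg x t ht hxr
    have hxp : (0:ℝ) < -x := by linarith
    have hY : -x < w := by linarith
    -- X ∈ (0, 1]
    have hX0 : 0 < (((C + ε) ^ (1 - β) * (-x) ^ (α * (1 - β)) - (b * (1 - β) * (1 - ε)) * t) ^ (1 / (1 - β)) * (-x) ^ (-α) / (C + ε)) := by
      have := rpow_pos_of_pos hu (1 / (1 - β))
      have := rpow_pos_of_pos hxp (-α)
      positivity
    have hUb : ((C + ε) ^ (1 - β) * (-x) ^ (α * (1 - β)) - (b * (1 - β) * (1 - ε)) * t) ^ (1 / (1 - β)) ≤ (C + ε) * (-x) ^ α := by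
      have h1 : ((C + ε) ^ (1 - β) * (-x) ^ (α * (1 - β)) - (b * (1 - β) * (1 - ε)) * t) ≤ (C + ε) ^ (1 - β) * (-x) ^ (α * (1 - β)) := by
        nlinarith [mul_pos hk ht]
      calc ((C + ε) ^ (1 - β) * (-x) ^ (α * (1 - β)) - (b * (1 - β) * (1 - ε)) * t) ^ (1 / (1 - β)) ≤ ((C + ε) ^ (1 - β) * (-x) ^ (α * (1 - β))) ^ (1 / (1 - β)) :=
            rpow_le_rpow hu.le h1 (by positivity)
        _ = (C + ε) * (-x) ^ α := by
            rw [Real.mul_rpow (by positivity) (by positivity),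
              ← Real.rpow_mul hA.le, ← Real.rpow_mul hxp.le,
              show (1 - β) * (1 / (1 - β)) = 1 by field_simp,
              show (α * (1 - β)) * (1 / (1 - β)) = α by field_simp, Real.rpow_one]
    have hX1 : (((C + ε) ^ (1 - β) * (-x) ^ (α * (1 - β)) - (b * (1 - β) * (1 - ε)) * t) ^ (1 / (1 - β)) * (-x) ^ (-α) / (C + ε)) ≤ 1 := by
      rw [div_le_one hA]
      calc ((C + ε) ^ (1 - β) * (-x) ^ (α * (1 - β)) - (b * (1 - β) * (1 - ε)) * t) ^ (1 / (1 - β)) * (-x) ^ (-α) ≤ (C + ε) * (-x) ^ α * (-x) ^ (-α) :=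
            mul_le_mul_of_nonneg_right hUb (rpow_nonneg hxp.le _)
        _ = (C + ε) := by
            rw [mul_assoc, ← Real.rpow_add hxp, add_neg_cancel, Real.rpow_zero, mul_one]
    have hXq : (((C + ε) ^ (1 - β) * (-x) ^ (α * (1 - β)) - (b * (1 - β) * (1 - ε)) * t) ^ (1 / (1 - β)) * (-x) ^ (-α) / (C + ε)) ^ (p * (m + β) - (1 + p)) ≤ 1 := Real.rpow_le_one hX0.le hX1 (by linarith)
    have hXβ : (((C + ε) ^ (1 - β) * (-x) ^ (α * (1 - β)) - (b * (1 - β) * (1 - ε)) * t) ^ (1 / (1 - β)) * (-x) ^ (-α) / (C + ε)) ^ (1 - β) ≤ 1 := Real.rpow_le_one hX0.le hX1 (by linarith)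
    -- bound |S x t|
    have hSb : |S x t| ≤ Kc * (-x) ^ θ := by
      simp only [S]
      rw [hgeq x t hx0 hu, abs_mul]
      have hpre : |(-b⁻¹ * (α * m) ^ p * (C + ε) ^ (m * p - β) * (-x) ^ θ * (((C + ε) ^ (1 - β) * (-x) ^ (α * (1 - β)) - (b * (1 - β) * (1 - ε)) * t) ^ (1 / (1 - β)) * (-x) ^ (-α) / (C + ε)) ^ (p * (m + β) - (1 + p)))|
          = b⁻¹ * (α * m) ^ p * (C + ε) ^ (m * p - β) * (-x) ^ θ * (((C + ε) ^ (1 - β) * (-x) ^ (α * (1 - β)) - (b * (1 - β) * (1 - ε)) * t) ^ (1 / (1 - β)) * (-x) ^ (-α) / (C + ε)) ^ (p * (m + β) - (1 + p)) := by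
        rw [show -b⁻¹ * (α * m) ^ p * (C + ε) ^ (m * p - β) * (-x) ^ θ * (((C + ε) ^ (1 - β) * (-x) ^ (α * (1 - β)) - (b * (1 - β) * (1 - ε)) * t) ^ (1 / (1 - β)) * (-x) ^ (-α) / (C + ε)) ^ (p * (m + β) - (1 + p))
            = -(b⁻¹ * (α * m) ^ p * (C + ε) ^ (m * p - β) * (-x) ^ θ * (((C + ε) ^ (1 - β) * (-x) ^ (α * (1 - β)) - (b * (1 - β) * (1 - ε)) * t) ^ (1 / (1 - β)) * (-x) ^ (-α) / (C + ε)) ^ (p * (m + β) - (1 + p))) by ring,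
          abs_neg, abs_of_pos]
        have := rpow_pos_of_pos hxp θ
        have := rpow_pos_of_pos hX0 (p * (m + β) - (1 + p))
        positivity
      rw [hpre]
      have hBb : |α * p * (m + β - 1) + p * ((α * (1 - β)) - 1) * (((C + ε) ^ (1 - β) * (-x) ^ (α * (1 - β)) - (b * (1 - β) * (1 - ε)) * t) ^ (1 / (1 - β)) * (-x) ^ (-α) / (C + ε)) ^ (1 - β)|
          ≤ α * p * |m + β - 1| + p * |(α * (1 - β)) - 1| := by
        calc |α * p * (m + β - 1) + p * ((α * (1 - β)) - 1) * (((C + ε) ^ (1 - β) * (-x) ^ (α * (1 - β)) - (b * (1 - β) * (1 - ε)) * t) ^ (1 / (1 - β)) * (-x) ^ (-α) / (C + ε)) ^ (1 - β)|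
            ≤ |α * p * (m + β - 1)| + |p * ((α * (1 - β)) - 1) * (((C + ε) ^ (1 - β) * (-x) ^ (α * (1 - β)) - (b * (1 - β) * (1 - ε)) * t) ^ (1 / (1 - β)) * (-x) ^ (-α) / (C + ε)) ^ (1 - β)| := abs_add_le _ _
          _ = α * p * |m + β - 1| + p * |(α * (1 - β)) - 1| * (((C + ε) ^ (1 - β) * (-x) ^ (α * (1 - β)) - (b * (1 - β) * (1 - ε)) * t) ^ (1 / (1 - β)) * (-x) ^ (-α) / (C + ε)) ^ (1 - β) := by
              simp only [abs_mul, abs_of_pos hα0, abs_of_pos hp,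
                abs_of_nonneg (rpow_nonneg hX0.le ((1:ℝ) - β))]
          _ ≤ α * p * |m + β - 1| + p * |(α * (1 - β)) - 1| := by
              have := mul_le_of_le_one_right
                (mul_nonneg hp.le (abs_nonneg ((α * (1 - β)) - 1))) hXβ
              linarith
      calc b⁻¹ * (α * m) ^ p * (C + ε) ^ (m * p - β) * (-x) ^ θ * (((C + ε) ^ (1 - β) * (-x) ^ (α * (1 - β)) - (b * (1 - β) * (1 - ε)) * t) ^ (1 / (1 - β)) * (-x) ^ (-α) / (C + ε)) ^ (p * (m + β) - (1 + p)) *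
            |α * p * (m + β - 1) + p * ((α * (1 - β)) - 1) * (((C + ε) ^ (1 - β) * (-x) ^ (α * (1 - β)) - (b * (1 - β) * (1 - ε)) * t) ^ (1 / (1 - β)) * (-x) ^ (-α) / (C + ε)) ^ (1 - β)|
          ≤ b⁻¹ * (α * m) ^ p * (C + ε) ^ (m * p - β) * (-x) ^ θ * 1 *
            (α * p * |m + β - 1| + p * |(α * (1 - β)) - 1|) := by
            have h2 := rpow_pos_of_pos hxp θ
            have h3 : (0:ℝ) < b⁻¹ * (α * m) ^ p * (C + ε) ^ (m * p - β) * (-x) ^ θ := by positivity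
            exact mul_le_mul (mul_le_mul_of_nonneg_left hXq h3.le) hBb (abs_nonneg _)
              (by positivity)
        _ = Kc * (-x) ^ θ := by rw [hKcdef]; ring
    -- conclude
    have hYθ : (-x) ^ θ ≤ δ / (Kc + 1) := by
      have h1 : -x < (δ / (Kc + 1)) ^ (1 / θ) := lt_of_lt_of_le hY (min_le_right _ _)
      have h2 : (-x) ^ θ ≤ ((δ / (Kc + 1)) ^ (1 / θ)) ^ θ :=
        rpow_le_rpow hxp.le h1.le hθ.le
      rwa [← Real.rpow_mul (by positivity), one_div, inv_mul_cancel₀ hθ.ne',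
        Real.rpow_one] at h2
    calc |S x t| ≤ Kc * (-x) ^ θ := hSb
      _ ≤ Kc * (δ / (Kc + 1)) := mul_le_mul_of_nonneg_left hYθ hKc
      _ < δ := by
          rw [mul_div_assoc', div_lt_iff₀ hKc1]; nlinarith
end
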